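/- arXiv:1602.03077 — 8 statements merged into one kernel-verified Lean document; each statement's English description precedes it below -/
import Mathlib

section
/- Let K be a field and let N be a nonzero subspace of the space of n×n symmetric matrices over K such that every nonzero element of N has odd rank. If r is the maximum rank of elements of N and |K| ≥ r+1 (or K infinite), then dim N ≤ r(r+1)/2. -/
open Matrix



section Aux

variable {K : Type*} [Field K]

private lemma gram_eq_mul {n m : Type*} [Fintype n] [Fintype m]
    (M : Matrix n n K) (w : m → n → K) :
    (Matrix.of fun a b => w a ⬝ᵥ M.mulVec (w b) : Matrix m m K) =
      (Matrix.of fun i a => w a i)ᵀ * M * (Matrix.of fun i a => w a i) := by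
  ext a b
  simp only [Matrix.of_apply, Matrix.mul_apply, Matrix.transpose_apply, Matrix.mulVec,
    dotProduct, Finset.sum_mul, Finset.mul_sum]
  rw [Finset.sum_comm]
  exact Finset.sum_congr rfl fun i _ => Finset.sum_congr rfl fun j _ => by ring

private lemma rank_gram_le {n m : Type*} [Fintype n] [Fintype m] [DecidableEq n]
    (M : Matrix n n K) (w : m → n → K) :
    (Matrix.of fun a b => w a ⬝ᵥ M.mulVec (w b) : Matrix m m K).rank ≤ M.rank := by
  rw [gram_eq_mul]
  exact (Matrix.rank_mul_le_left _ _).trans (Matrix.rank_mul_le_right _ _)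

private lemma eval_charpoly_neg {m : Type*} [Fintype m] [DecidableEq m]
    (M : Matrix m m K) (s : K) :
    (-M).charpoly.eval s = (s • (1 : Matrix m m K) + M).det := by
  rw [Matrix.charpoly, ← Polynomial.coe_evalRingHom, RingHom.map_det]
  congr 1
  ext i j
  by_cases h : i = j <;>
    simp [Matrix.charmatrix_apply, Matrix.map_apply, Matrix.one_apply, Matrix.diagonal_apply, h]

end Aux


section Aux2

variable {K : Type*} [Field K]

private lemma exists_isUnit_det_smul_add {r : ℕ} {ι : Type*} [Fintype ι] [DecidableEq ι]
    (hcard : (r + 1 : Cardinal) ≤ Cardinal.mk K)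
    (G : Matrix (Fin r) (Fin r) K) (hG : IsUnit G.det)
    (A : Matrix (Fin r ⊕ ι) (Fin r ⊕ ι) K) (hD : IsUnit A.toBlocks₂₂.det) :
    ∃ s : K, IsUnit ((s • (Matrix.fromBlocks G 0 0 0 : Matrix (Fin r ⊕ ι) (Fin r ⊕ ι) K)) + A).det := by
  have hDinv : Invertible A.toBlocks₂₂ := A.toBlocks₂₂.invertibleOfIsUnitDet hD
  have hGinv : Invertible G := G.invertibleOfIsUnitDet hG
  set E : Matrix (Fin r) (Fin r) K :=
    A.toBlocks₁₁ - A.toBlocks₁₂ * ⅟A.toBlocks₂₂ * A.toBlocks₂₁ with hE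
  set M : Matrix (Fin r) (Fin r) K := ⅟G * E with hM
  have hp : (-M).charpoly ≠ 0 := (Matrix.charpoly_monic _).ne_zero
  have hdeg : ((-M).charpoly.natDegree : Cardinal) < Cardinal.mk K := by
    rw [Matrix.charpoly_natDegree_eq_dim, Fintype.card_fin]
    refine lt_of_lt_of_le ?_ hcard
    exact_mod_cast Nat.cast_lt.mpr (Nat.lt_succ_self r)
  obtain ⟨s, hs⟩ := (-M).charpoly.exists_eval_ne_zero_of_natDegree_lt_card hp hdeg
  refine ⟨s, ?_⟩
  have h1 : s • (Matrix.fromBlocks G 0 0 0 : Matrix (Fin r ⊕ ι) (Fin r ⊕ ι) K) + A =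
      Matrix.fromBlocks (s • G + A.toBlocks₁₁) A.toBlocks₁₂ A.toBlocks₂₁ A.toBlocks₂₂ := by
    conv_lhs => rw [← Matrix.fromBlocks_toBlocks A]
    rw [Matrix.fromBlocks_smul, Matrix.fromBlocks_add]
    simp
  have h2 : G * (s • (1 : Matrix (Fin r) (Fin r) K) + M) = s • G + E := by
    rw [Matrix.mul_add, mul_smul_comm, Matrix.mul_one, hM, ← Matrix.mul_assoc,
      mul_invOf_self, Matrix.one_mul]
  rw [h1, Matrix.det_fromBlocks₂₂, add_sub_assoc, ← hE, ← h2, Matrix.det_mul]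
  rw [eval_charpoly_neg] at hs
  exact hD.mul (hG.mul (isUnit_iff_ne_zero.mpr hs))

private lemma finrank_submodule_prod {M M' : Type*} [AddCommGroup M] [AddCommGroup M']
    [Module K M] [Module K M'] [FiniteDimensional K M] [FiniteDimensional K M']
    (p : Submodule K M) (q : Submodule K M') :
    Module.finrank K (p.prod q) = Module.finrank K p + Module.finrank K q := by
  rw [← Module.finrank_prod]
  refine LinearEquiv.finrank_eq ?_
  exact
    { toFun := fun x => (⟨x.1.1, ((Submodule.mem_prod).mp x.2).1⟩,
        ⟨x.1.2, ((Submodule.mem_prod).mp x.2).2⟩)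
      invFun := fun y => ⟨(y.1.1, y.2.1), (Submodule.mem_prod).mpr ⟨y.1.2, y.2.2⟩⟩
      map_add' := fun x y => by ext <;> rfl
      map_smul' := fun c x => by ext <;> rfl
      left_inv := fun x => by ext <;> rfl
      right_inv := fun y => by ext <;> rfl }

private lemma rank_fromBlocks_antidiag {α β γ δ : Type*}
    [Fintype α] [Fintype β] [Fintype γ] [Fintype δ]
    (B : Matrix γ β K) (C : Matrix δ α K) :
    (Matrix.fromBlocks 0 B C 0 : Matrix (γ ⊕ δ) (α ⊕ β) K).rank = B.rank + C.rank := by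
  classical
  have h : (Matrix.fromBlocks 0 B C 0 : Matrix (γ ⊕ δ) (α ⊕ β) K).mulVecLin =
      (LinearEquiv.sumArrowLequivProdArrow γ δ K K).symm.toLinearMap.comp
        ((B.mulVecLin.prodMap C.mulVecLin).comp
          ((LinearEquiv.prodComm K (α → K) (β → K)).toLinearMap.comp
            (LinearEquiv.sumArrowLequivProdArrow α β K K).toLinearMap)) := by
    apply LinearMap.ext; intro v
    funext c
    cases c <;>
      simp [Matrix.fromBlocks_mulVec, LinearEquiv.sumArrowLequivProdArrow,
        Equiv.sumArrowEquivProdArrow, Matrix.zero_mulVec]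
  have hsurj : LinearMap.range
      ((LinearEquiv.prodComm K (α → K) (β → K)).toLinearMap.comp
        (LinearEquiv.sumArrowLequivProdArrow α β K K).toLinearMap) = ⊤ :=
    LinearMap.range_eq_top.mpr
      ((LinearEquiv.prodComm K (α → K) (β → K)).surjective.comp
        (LinearEquiv.sumArrowLequivProdArrow α β K K).surjective)
  have hrange : LinearMap.range (B.mulVecLin.prodMap C.mulVecLin) =
      (LinearMap.range B.mulVecLin).prod (LinearMap.range C.mulVecLin) := by
    ext x
    simp only [LinearMap.mem_range, Submodule.mem_prod]
    constructor
    · rintro ⟨y, rfl⟩; exact ⟨⟨y.1, rfl⟩, ⟨y.2, rfl⟩⟩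
    · rintro ⟨⟨a, ha⟩, ⟨b, hb⟩⟩; exact ⟨(a, b), Prod.ext ha hb⟩
  rw [Matrix.rank, h, LinearMap.range_comp,
    LinearMap.range_comp_of_range_eq_top _ hsurj, LinearEquiv.finrank_map_eq, hrange,
    finrank_submodule_prod]
  rfl

end Aux2
section Aux3

variable {K : Type*} [Field K]

private lemma dot_sum_right {n ι : Type*} [Fintype n] [Fintype ι] (x : n → K) (g : ι → n → K) :
    x ⬝ᵥ (∑ c, g c) = ∑ c, x ⬝ᵥ g c := by
  simp only [dotProduct, Finset.sum_apply, Finset.mul_sum]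
  exact Finset.sum_comm

private lemma gram_smul_add {n m : Type*} [Fintype n] [Fintype m] (s : K)
    (M₁ M₂ : Matrix n n K) (w : m → n → K) :
    (Matrix.of fun a b => w a ⬝ᵥ (s • M₁ + M₂) *ᵥ w b : Matrix m m K) =
      s • (Matrix.of fun a b => w a ⬝ᵥ M₁ *ᵥ w b) + (Matrix.of fun a b => w a ⬝ᵥ M₂ *ᵥ w b) := by
  ext a b
  simp [Matrix.add_mulVec, Matrix.smul_mulVec, dotProduct_add,
    dotProduct_smul]

end Aux3

/-- A nonzero subspace of symmetric n×n matrices in which every nonzero element has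
odd rank, with maximum rank r and |K| ≥ r + 1 (in particular if K is infinite),
has dimension at most r(r+1)/2. -/
theorem odd_rank_subspace_dim_bound {K : Type*} [Field K] (n r : ℕ)
    (N : Submodule K (Matrix (Fin n) (Fin n) K))
    (hne : N ≠ ⊥)
    (hsymm : ∀ S ∈ N, Sᵀ = S)
    (hodd : ∀ S ∈ N, S ≠ 0 → Odd S.rank)
    (hle : ∀ S ∈ N, S.rank ≤ r)
    (hmax : ∃ S ∈ N, S.rank = r)
    (hcard : (r + 1 : Cardinal) ≤ Cardinal.mk K) :
    Module.finrank K N ≤ r * (r + 1) / 2 := by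
  classical
  obtain ⟨S, hSN, hSr⟩ := hmax
  set f : (Fin n → K) →ₗ[K] (Fin n → K) := S.mulVecLin with hf
  obtain ⟨U, hU⟩ := Submodule.exists_isCompl (LinearMap.ker f)
  set d : ℕ := Module.finrank K (LinearMap.ker f) with hd
  have hranknull : r + d = n := by
    have h1 := LinearMap.finrank_range_add_finrank_ker f
    rw [← hd] at h1
    have h2 : Module.finrank K (LinearMap.range f) = r := hSr
    rw [h2] at h1
    simpa [Module.finrank_fintype_fun_eq_card] using h1
  have hUdim : Module.finrank K U = r := by
    have h1 := Submodule.finrank_add_eq_of_isCompl hU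
    rw [← hd, Module.finrank_fintype_fun_eq_card, Fintype.card_fin] at h1
    omega
  let bU : Module.Basis (Fin r) K U := (Module.finBasis K U).reindex (finCongr hUdim)
  let bK : Module.Basis (Fin d) K (LinearMap.ker f) :=
    (Module.finBasis K (LinearMap.ker f)).reindex (finCongr rfl)
  let bV : Module.Basis (Fin r ⊕ Fin d) K (Fin n → K) :=
    (bU.prod bK).map (Submodule.prodEquivOfIsCompl _ _ hU.symm)
  let u : Fin r → Fin n → K := fun i => bV (Sum.inl i)
  let κ : Fin d → Fin n → K := fun j => bV (Sum.inr j)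
  have hbVl : ∀ i, bV (Sum.inl i) = ((bU i : (Fin n → K)) : Fin n → K) := by
    intro i
    simp only [bV, Module.Basis.map_apply, Submodule.coe_prodEquivOfIsCompl']
    rw [Module.Basis.prod_apply]
    simp
  have hbVr : ∀ j, bV (Sum.inr j) = ((bK j : (Fin n → K)) : Fin n → K) := by
    intro j
    simp only [bV, Module.Basis.map_apply, Submodule.coe_prodEquivOfIsCompl']
    rw [Module.Basis.prod_apply]
    simp
  have hu : ∀ i, u i ∈ U := by
    intro i; rw [show u i = bV (Sum.inl i) from rfl, hbVl]; exact (bU i).2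
  have hκ : ∀ j, S *ᵥ κ j = 0 := by
    intro j
    have : κ j ∈ LinearMap.ker f := by
      rw [show κ j = bV (Sum.inr j) from rfl, hbVr]; exact (bK j).2
    simpa [f, Matrix.mulVecLin_apply] using this
  -- symmetry of the pairing
  have bsym : ∀ T ∈ N, ∀ x y : Fin n → K, x ⬝ᵥ T *ᵥ y = y ⬝ᵥ T *ᵥ x := by
    intro T hT x y
    have hT' : ∀ i j, T j i = T i j := fun i j => congrFun (congrFun (hsymm T hT) i) j
    simp only [dotProduct, Matrix.mulVec, Finset.mul_sum]
    rw [Finset.sum_comm]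
    refine Finset.sum_congr rfl fun j _ => Finset.sum_congr rfl fun i _ => ?_
    rw [hT' j i]
    ring
  -- Gram matrix of S on U
  set G : Matrix (Fin r) (Fin r) K := Matrix.of fun i j => u i ⬝ᵥ S *ᵥ u j with hG
  have hGdet : IsUnit G.det := by
    rw [isUnit_iff_ne_zero]
    intro h0
    obtain ⟨a, ha0, haeq⟩ := (Matrix.exists_mulVec_eq_zero_iff).mpr h0
    set v : Fin n → K := ∑ j, a j • u j with hv
    have hexp : S *ᵥ v = ∑ j, a j • (S *ᵥ u j) := by
      rw [hv, ← Matrix.mulVecLin_apply, map_sum]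
      simp [Matrix.mulVecLin_apply]
    have hSv : ∀ c : Fin r ⊕ Fin d, (S *ᵥ v) ⬝ᵥ bV c = 0 := by
      rintro (i | j)
      · rw [dotProduct_comm]
        have hGai : (G *ᵥ a) i = ∑ j, G i j * a j := by
          simp [Matrix.mulVec, dotProduct]
        have : bV (Sum.inl i) ⬝ᵥ (S *ᵥ v) = (G *ᵥ a) i := by
          rw [hexp, dot_sum_right, hGai]
          refine Finset.sum_congr rfl fun j _ => ?_
          rw [dotProduct_smul, smul_eq_mul, mul_comm]
          rfl
        rw [this, haeq]
        rfl
      · rw [dotProduct_comm]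
        calc bV (Sum.inr j) ⬝ᵥ (S *ᵥ v) = v ⬝ᵥ (S *ᵥ κ j) := bsym S hSN (κ j) v
        _ = 0 := by rw [hκ j, dotProduct_zero]
    have hSv0 : S *ᵥ v = 0 := by
      have hall : ∀ w : Fin n → K, (S *ᵥ v) ⬝ᵥ w = 0 := by
        intro w
        have hw : w = ∑ c, bV.repr w c • bV c := (bV.sum_repr w).symm
        rw [hw, dot_sum_right]
        refine Finset.sum_eq_zero fun c _ => ?_
        rw [dotProduct_smul, hSv c, smul_zero]
      funext i
      have := hall (Pi.single i 1)
      rwa [dotProduct_single, mul_one] at this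
    have hvU : v ∈ U := by
      rw [hv]
      exact Submodule.sum_mem _ fun j _ => Submodule.smul_mem _ _ (hu j)
    have hvker : v ∈ LinearMap.ker f := by
      rw [LinearMap.mem_ker]
      simpa [f, Matrix.mulVecLin_apply] using hSv0
    have hv0 : v = 0 := by
      have : v ∈ LinearMap.ker f ⊓ U := ⟨hvker, hvU⟩
      rwa [hU.inf_eq_bot, Submodule.mem_bot] at this
    have hli : LinearIndependent K u := bV.linearIndependent.comp Sum.inl Sum.inl_injective
    have := Fintype.linearIndependent_iff.mp hli a (by rw [← hv]; exact hv0)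
    exact ha0 (funext this)
  -- block structure of Gram matrices of S
  have gram_blocks : ∀ (k : ℕ) (xs : Fin k → Fin n → K), (∀ a, S *ᵥ xs a = 0) →
      (Matrix.of fun a b => (Sum.elim u xs a) ⬝ᵥ S *ᵥ (Sum.elim u xs b) :
        Matrix (Fin r ⊕ Fin k) (Fin r ⊕ Fin k) K) = Matrix.fromBlocks G 0 0 0 := by
    intro k xs hxs
    ext a b
    rcases a with i | i <;> rcases b with j | j
    · rfl
    · show u i ⬝ᵥ S *ᵥ xs j = (Matrix.fromBlocks G 0 0 0) (Sum.inl i) (Sum.inr j)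
      rw [hxs j, dotProduct_zero]
      simp [Matrix.fromBlocks]
    · show xs i ⬝ᵥ S *ᵥ u j = (Matrix.fromBlocks G 0 0 0) (Sum.inr i) (Sum.inl j)
      rw [bsym S hSN, hxs i, dotProduct_zero]
      simp [Matrix.fromBlocks]
    · show xs i ⬝ᵥ S *ᵥ xs j = (Matrix.fromBlocks G 0 0 0) (Sum.inr i) (Sum.inr j)
      rw [hxs j, dotProduct_zero]
      simp [Matrix.fromBlocks]
  -- rank lower bound from an invertible Gram minor
  have rank_ge : ∀ (M : Matrix (Fin n) (Fin n) K) (k : ℕ) (w : Fin r ⊕ Fin k → Fin n → K),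
      IsUnit (Matrix.of fun a b => w a ⬝ᵥ M *ᵥ w b : Matrix (Fin r ⊕ Fin k) (Fin r ⊕ Fin k) K).det →
      r + k ≤ M.rank := by
    intro M k w hdet
    have h1 := rank_gram_le (K := K) M w
    rwa [Matrix.rank_of_isUnit _ ((Matrix.isUnit_iff_isUnit_det _).mpr hdet), Fintype.card_sum,
      Fintype.card_fin, Fintype.card_fin] at h1
  -- Step 1 : the quadratic form of any T ∈ N vanishes on ker S
  have step1 : ∀ T ∈ N, ∀ x : Fin n → K, S *ᵥ x = 0 → x ⬝ᵥ T *ᵥ x = 0 := by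
    intro T hT x hx
    by_contra hdne
    set w : Fin r ⊕ Fin 1 → Fin n → K := Sum.elim u (fun _ => x) with hw
    have hA : (Matrix.of fun a b => w a ⬝ᵥ S *ᵥ w b : Matrix (Fin r ⊕ Fin 1) (Fin r ⊕ Fin 1) K) =
        Matrix.fromBlocks G 0 0 0 := gram_blocks 1 _ (fun _ => hx)
    have hD : IsUnit ((Matrix.of fun a b => w a ⬝ᵥ T *ᵥ w b :
        Matrix (Fin r ⊕ Fin 1) (Fin r ⊕ Fin 1) K).toBlocks₂₂).det := by
      rw [isUnit_iff_ne_zero, Matrix.det_fin_one]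
      exact hdne
    obtain ⟨s, hs⟩ := exists_isUnit_det_smul_add hcard G hGdet _ hD
    have hgram : (Matrix.of fun a b => w a ⬝ᵥ (s • S + T) *ᵥ w b :
        Matrix (Fin r ⊕ Fin 1) (Fin r ⊕ Fin 1) K) =
        s • Matrix.fromBlocks G 0 0 0 + (Matrix.of fun a b => w a ⬝ᵥ T *ᵥ w b) := by
      rw [gram_smul_add, hA]
    have hrk := rank_ge (s • S + T) 1 w (by rw [hgram]; exact hs)
    have := hle _ (N.add_mem (N.smul_mem s hSN) hT)
    omega
  -- Step 2 : the bilinear form of any T ∈ N vanishes on ker S × ker S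
  have step2 : ∀ T ∈ N, ∀ x y : Fin n → K, S *ᵥ x = 0 → S *ᵥ y = 0 → x ⬝ᵥ T *ᵥ y = 0 := by
    intro T hT x y hx hy
    by_contra hdne
    set w : Fin r ⊕ Fin 2 → Fin n → K := Sum.elim u ![x, y] with hw
    have hxs : ∀ a : Fin 2, S *ᵥ (![x, y] a) = 0 := by
      intro a; fin_cases a
      · simpa using hx
      · simpa using hy
    have hA : (Matrix.of fun a b => w a ⬝ᵥ S *ᵥ w b : Matrix (Fin r ⊕ Fin 2) (Fin r ⊕ Fin 2) K) =
        Matrix.fromBlocks G 0 0 0 := gram_blocks 2 ![x, y] hxs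
    have h00 : x ⬝ᵥ T *ᵥ x = 0 := step1 T hT x hx
    have h11 : y ⬝ᵥ T *ᵥ y = 0 := step1 T hT y hy
    have h10 : y ⬝ᵥ T *ᵥ x = x ⬝ᵥ T *ᵥ y := bsym T hT y x
    have hD : IsUnit ((Matrix.of fun a b => w a ⬝ᵥ T *ᵥ w b :
        Matrix (Fin r ⊕ Fin 2) (Fin r ⊕ Fin 2) K).toBlocks₂₂).det := by
      rw [isUnit_iff_ne_zero, Matrix.det_fin_two]
      have e00 : (Matrix.of fun a b => w a ⬝ᵥ T *ᵥ w b :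
          Matrix (Fin r ⊕ Fin 2) (Fin r ⊕ Fin 2) K).toBlocks₂₂ 0 0 = x ⬝ᵥ T *ᵥ x := rfl
      have e01 : (Matrix.of fun a b => w a ⬝ᵥ T *ᵥ w b :
          Matrix (Fin r ⊕ Fin 2) (Fin r ⊕ Fin 2) K).toBlocks₂₂ 0 1 = x ⬝ᵥ T *ᵥ y := rfl
      have e10 : (Matrix.of fun a b => w a ⬝ᵥ T *ᵥ w b :
          Matrix (Fin r ⊕ Fin 2) (Fin r ⊕ Fin 2) K).toBlocks₂₂ 1 0 = y ⬝ᵥ T *ᵥ x := rfl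
      have e11 : (Matrix.of fun a b => w a ⬝ᵥ T *ᵥ w b :
          Matrix (Fin r ⊕ Fin 2) (Fin r ⊕ Fin 2) K).toBlocks₂₂ 1 1 = y ⬝ᵥ T *ᵥ y := rfl
      rw [e00, e01, e10, e11, h00, h11, h10]
      simpa using mul_ne_zero hdne hdne
    obtain ⟨s, hs⟩ := exists_isUnit_det_smul_add hcard G hGdet _ hD
    have hgram : (Matrix.of fun a b => w a ⬝ᵥ (s • S + T) *ᵥ w b :
        Matrix (Fin r ⊕ Fin 2) (Fin r ⊕ Fin 2) K) =
        s • Matrix.fromBlocks G 0 0 0 + (Matrix.of fun a b => w a ⬝ᵥ T *ᵥ w b) := by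
      rw [gram_smul_add, hA]
    have hrk := rank_ge (s • S + T) 2 w (by rw [hgram]; exact hs)
    have := hle _ (N.add_mem (N.smul_mem s hSN) hT)
    omega
  -- Step 3 : if the form of T vanishes on U × U then T = 0
  have step3 : ∀ T ∈ N, (∀ i j, u i ⬝ᵥ T *ᵥ u j = 0) → T = 0 := by
    intro T hT h0
    by_contra hT0
    have hoddT := hodd T hT hT0
    set Mg : Matrix (Fin r ⊕ Fin d) (Fin r ⊕ Fin d) K :=
      Matrix.of fun a b => bV a ⬝ᵥ T *ᵥ bV b with hMg
    let e : (Fin r ⊕ Fin d) ≃ Fin n := finSumFinEquiv.trans (finCongr hranknull)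
    let bV' : Module.Basis (Fin n) K (Fin n → K) := bV.reindex e
    let P : Matrix (Fin n) (Fin n) K := (Pi.basisFun K (Fin n)).toMatrix bV'
    have hPinv : Invertible P := (Pi.basisFun K (Fin n)).invertibleToMatrix bV'
    have hPdet : IsUnit P.det := P.isUnit_det_of_invertible
    have hPTdet : IsUnit Pᵀ.det := by rwa [Matrix.det_transpose]
    have hPentry : ∀ i j, P i j = bV' j i := by
      intro i j
      simp [P, Module.Basis.toMatrix_apply]
    have hQP : (Matrix.of fun i a => bV' a i : Matrix (Fin n) (Fin n) K) = P := by
      ext i a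
      rw [hPentry]
      rfl
    have hrankT : T.rank = Mg.rank := by
      have h1 : (Matrix.of fun a b => bV' a ⬝ᵥ T *ᵥ bV' b : Matrix (Fin n) (Fin n) K).rank
          = T.rank := by
        rw [gram_eq_mul, hQP, Matrix.mul_assoc,
          Matrix.rank_mul_eq_right_of_isUnit_det Pᵀ (T * P) hPTdet,
          Matrix.rank_mul_eq_left_of_isUnit_det P T hPdet]
      have h2 : (Matrix.of fun a b => bV' a ⬝ᵥ T *ᵥ bV' b : Matrix (Fin n) (Fin n) K)
          = Mg.submatrix e.symm e.symm := by
        ext a b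
        simp [Mg, bV', Module.Basis.reindex_apply]
      rw [h2, Matrix.rank_submatrix] at h1
      exact h1.symm
    have hκκ : ∀ a b, κ a ⬝ᵥ T *ᵥ κ b = 0 := fun a b => step2 T hT _ _ (hκ a) (hκ b)
    have hMgblocks : Mg = Matrix.fromBlocks 0 (Mg.toBlocks₁₂) (Mg.toBlocks₁₂)ᵀ 0 := by
      ext a b
      rcases a with i | i <;> rcases b with j | j
      · show u i ⬝ᵥ T *ᵥ u j = (Matrix.fromBlocks 0 (Mg.toBlocks₁₂) (Mg.toBlocks₁₂)ᵀ 0)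
          (Sum.inl i) (Sum.inl j)
        rw [h0 i j]
        simp [Matrix.fromBlocks]
      · rfl
      · show κ i ⬝ᵥ T *ᵥ u j = (Matrix.fromBlocks 0 (Mg.toBlocks₁₂) (Mg.toBlocks₁₂)ᵀ 0)
          (Sum.inr i) (Sum.inl j)
        rw [bsym T hT]
        simp [Matrix.fromBlocks, Matrix.toBlocks₁₂]
        rfl
      · show κ i ⬝ᵥ T *ᵥ κ j = (Matrix.fromBlocks 0 (Mg.toBlocks₁₂) (Mg.toBlocks₁₂)ᵀ 0)
          (Sum.inr i) (Sum.inr j)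
        rw [hκκ]
        simp [Matrix.fromBlocks]
    have heven : Even T.rank := by
      rw [hrankT, hMgblocks, rank_fromBlocks_antidiag, Matrix.rank_transpose]
      exact Even.add_self _
    exact (Nat.not_odd_iff_even.mpr heven) hoddT
  -- the injective linear map into functions on symmetric pairs
  let Φ : N →ₗ[K] (Sym2 (Fin r) → K) :=
    { toFun := fun T => Sym2.lift ⟨fun i j => u i ⬝ᵥ (T : Matrix (Fin n) (Fin n) K) *ᵥ u j,
        fun i j => bsym _ T.2 (u i) (u j)⟩
      map_add' := by
        intro T₁ T₂
        funext p
        refine Sym2.inductionOn p fun i j => ?_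
        simp [Sym2.lift_mk, Matrix.add_mulVec, dotProduct_add]
      map_smul' := by
        intro c T
        funext p
        refine Sym2.inductionOn p fun i j => ?_
        simp [Sym2.lift_mk, Matrix.smul_mulVec, dotProduct_smul] }
  have hinj : Function.Injective Φ := by
    rw [injective_iff_map_eq_zero]
    intro T hTeq
    have h0 : ∀ i j, u i ⬝ᵥ (T : Matrix (Fin n) (Fin n) K) *ᵥ u j = 0 := by
      intro i j
      have := congrFun hTeq (Sym2.mk i j)
      simpa [Φ, Sym2.lift_mk] using this
    exact Subtype.ext (step3 _ T.2 h0)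
  have hfin := LinearMap.finrank_le_finrank_of_injective hinj
  rw [Module.finrank_fintype_fun_eq_card, Sym2.card, Fintype.card_fin,
    Nat.choose_two_right] at hfin
  simpa [Nat.mul_comm] using hfin
end

section
/- Let K be a field of characteristic 2, V an n-dimensional K-vector space, and M a subspace of Symm(V) with M ∩ Alt(V) = 0. Define V(M) = {v ∈ V : f(v,v) = 0 for all f ∈ M}. Then dim V(M) ≤ n − dim M. -/
/-- In characteristic 2, if M is a subspace of symmetric bilinear forms containing
no nonzero alternating form, then dim V(M) ≤ n − dim M, where
V(M) = {v : f(v,v) = 0 for all f ∈ M}. -/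
theorem dim_common_isotropic_le {K V : Type*} [Field K] [CharP K 2]
    [AddCommGroup V] [Module K V] [FiniteDimensional K V] (n : ℕ)
    (hdim : Module.finrank K V = n)
    (M : Submodule K (V →ₗ[K] V →ₗ[K] K))
    (hsymm : ∀ f ∈ M, LinearMap.BilinForm.IsSymm f)
    (halt : ∀ f ∈ M, LinearMap.BilinForm.IsAlt f → f = 0)
    (W : Submodule K V)
    (hW : (W : Set V) = {v : V | ∀ f ∈ M, f v v = 0}) :
    Module.finrank K W ≤ n - Module.finrank K M := by
  obtain ⟨C, hC⟩ := Submodule.exists_isCompl W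
  have hrank : Module.finrank K W + Module.finrank K C = n := by
    rw [Submodule.finrank_add_eq_of_isCompl hC, hdim]
  set m := Module.finrank K C with hm
  let b : Module.Basis (Fin m) K C := Module.finBasis K C
  let Φ : M →ₗ[K] (Fin m → K) :=
    { toFun := fun f i => f.1 (b i : V) (b i : V)
      map_add' := by intros; rfl
      map_smul' := by intros; rfl }
  have hker : ∀ f : M, Φ f = 0 → f = 0 := by
    intro f hf0
    have hf' : ∀ i, f.1 (b i : V) (b i : V) = 0 := fun i => congrFun hf0 i
    have hsf := hsymm f.1 f.2
    -- the diagonal-zero set is a submodule in char 2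
    have key : ∀ v ∈ Submodule.span K (Set.range fun i => ((b i : C) : V)),
        f.1 v v = 0 := by
      intro v hv
      induction hv using Submodule.span_induction with
      | mem x hx => obtain ⟨i, rfl⟩ := hx; exact hf' i
      | zero => simp
      | add x y hx hy ihx ihy =>
          have hxy : f.1 x y + f.1 y x = 0 := by
            have := hsf.eq x y
            rw [← this]
            exact CharTwo.add_self_eq_zero _
          simp only [map_add, LinearMap.add_apply]
          rw [ihx, ihy]
          linear_combination hxy
      | smul c x hx ih => simp [ih]
    have hCle : ∀ c : C, f.1 (c : V) (c : V) = 0 := by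
      intro c
      apply key
      have h1 : c ∈ Submodule.span K (Set.range b) := by
        rw [b.span_eq]; trivial
      have h2 := Submodule.mem_map_of_mem (f := C.subtype) h1
      rw [Submodule.map_span] at h2
      convert h2 using 2
      rw [← Set.range_comp]
      rfl
      rfl
    have halt' : LinearMap.BilinForm.IsAlt f.1 := by
      intro v
      have hv : v ∈ W ⊔ C := by rw [hC.sup_eq_top]; trivial
      obtain ⟨w, hw, c, hc, rfl⟩ := Submodule.mem_sup.mp hv
      have hww : f.1 w w = 0 := by
        have : w ∈ (W : Set V) := hw
        rw [hW] at this
        exact this f.1 f.2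
      have hcc : f.1 c c = 0 := hCle ⟨c, hc⟩
      have hwc : f.1 w c + f.1 c w = 0 := by
        have := hsf.eq w c
        rw [← this]
        exact CharTwo.add_self_eq_zero _
      simp only [map_add, LinearMap.add_apply]
      rw [hww, hcc]
      linear_combination hwc
    exact Subtype.ext (halt f.1 f.2 halt')
  letI : AddCommGroup M := @Submodule.addCommGroup K (V →ₗ[K] V →ₗ[K] K) _ _ _ M
  have hinj : Function.Injective Φ := by
    intro f g hfg
    rw [← sub_eq_zero]
    exact hker _ (by rw [map_sub, hfg, sub_self])
  have hMle : Module.finrank K M ≤ m := by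
    have := LinearMap.finrank_le_finrank_of_injective hinj
    rwa [Module.finrank_fin_fun] at this
  omega
end

section
/- Let K be a perfect field of characteristic 2, V an n-dimensional K-vector space, and M a subspace of Symm(V) with M ∩ Alt(V) = 0. Then dim V(M) = n − dim M, where V(M) = {v ∈ V : f(v,v) = 0 for all f ∈ M}. -/
/-- Over a perfect field of characteristic 2, if M is a subspace of symmetric
bilinear forms with M ∩ Alt(V) = 0, then dim V(M) = n − dim M. -/
theorem dim_common_isotropic_eq_of_perfect {K V : Type*} [Field K] [CharP K 2]
    [PerfectField K] [AddCommGroup V] [Module K V] [FiniteDimensional K V] (n : ℕ)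
    (hdim : Module.finrank K V = n)
    (M : Submodule K (V →ₗ[K] V →ₗ[K] K))
    (hsymm : ∀ f ∈ M, LinearMap.BilinForm.IsSymm f)
    (halt : ∀ f ∈ M, LinearMap.BilinForm.IsAlt f → f = 0)
    (W : Submodule K V)
    (hW : (W : Set V) = {v : V | ∀ f ∈ M, f v v = 0}) :
    Module.finrank K W = n - Module.finrank K M := by
  classical
  set σ : K ≃+* K := (frobeniusEquiv K 2).symm with hσ
  have hσ_sq : ∀ c : K, σ (c ^ 2) = c := fun c =>
    frobeniusEquiv_symm_apply_frobenius K 2 c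
  -- The semilinear map Θ : M →ₛₗ[σ] Dual K V, f ↦ (v ↦ √(f v v)).
  have hdiag_add : ∀ f ∈ M, ∀ u v : V,
      f (u + v) (u + v) = f u u + f v v := by
    intro f hf u v
    have hs : RingHom.id K (f u v) = f v u := (hsymm f hf).eq u v
    simp only [map_add, LinearMap.add_apply]
    have h2 : f u v + f v u = 0 := by
      rw [← hs]
      simp only [RingHom.id_apply]
      rw [← two_smul K (f u v)]
      simp [CharTwo.two_eq_zero]
    linear_combination h2
  have hdiag_smul : ∀ (f : V →ₗ[K] V →ₗ[K] K) (c : K) (v : V),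
      f (c • v) (c • v) = c ^ 2 * f v v := by
    intro f c v
    simp [map_smul, smul_smul, sq, mul_assoc, smul_eq_mul]
  let Θ : M →ₛₗ[(σ : K →+* K)] Module.Dual K V :=
    { toFun := fun f =>
        { toFun := fun v => σ ((f : V →ₗ[K] V →ₗ[K] K) v v)
          map_add' := by
            intro u v
            show σ ((f : V →ₗ[K] V →ₗ[K] K) (u + v) (u + v))
              = σ ((f : V →ₗ[K] V →ₗ[K] K) u u) + σ ((f : V →ₗ[K] V →ₗ[K] K) v v)
            rw [hdiag_add f f.2 u v, map_add]
          map_smul' := by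
            intro c v
            show σ ((f : V →ₗ[K] V →ₗ[K] K) (c • v) (c • v))
              = c • σ ((f : V →ₗ[K] V →ₗ[K] K) v v)
            rw [hdiag_smul (f : V →ₗ[K] V →ₗ[K] K) c v]
            rw [map_mul, hσ_sq, smul_eq_mul] }
      map_add' := by
        intro f g
        ext v
        simp [map_add]
      map_smul' := by
        intro c f
        ext v
        simp [smul_eq_mul] }
  have hΘinj : Function.Injective Θ := by
    intro f g hfg
    have h : ∀ v : V, σ ((f : V →ₗ[K] V →ₗ[K] K) v v) = σ ((g : V →ₗ[K] V →ₗ[K] K) v v) :=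
      fun v => congrFun (congrArg (fun (φ : Module.Dual K V) => φ.toFun) hfg) v
    set F : V →ₗ[K] V →ₗ[K] K := (f : V →ₗ[K] V →ₗ[K] K) - (g : V →ₗ[K] V →ₗ[K] K)
      with hF
    have hFM : F ∈ M := by
      have h1 := M.add_mem f.2 (M.smul_mem (-1 : K) g.2)
      convert h1 using 1
      rw [hF]; ext x y; simp [sub_eq_add_neg]
    have hd : ∀ v : V, F v v = 0 := by
      intro v
      have := σ.injective (h v)
      simp only [hF, LinearMap.sub_apply]
      rw [this]
      simp
    have hF0 : F = 0 := halt _ hFM (fun v => hd v)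
    exact Subtype.ext (sub_eq_zero.mp hF0)
  set N : Submodule K (Module.Dual K V) := LinearMap.range Θ with hN
  -- W is the dual coannihilator of N
  have hWN : W = N.dualCoannihilator := by
    ext v
    rw [← SetLike.mem_coe, hW, Submodule.mem_dualCoannihilator, Set.mem_setOf_eq]
    constructor
    · intro hv φ hφ
      obtain ⟨f, rfl⟩ := hφ
      simp only [Θ, LinearMap.coe_mk, AddHom.coe_mk]
      rw [hv f f.2]
      simp
    · intro hv f hf
      have := hv (Θ ⟨f, hf⟩) ⟨⟨f, hf⟩, rfl⟩
      simp only [Θ, LinearMap.coe_mk, AddHom.coe_mk] at this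
      exact σ.injective (by simpa using this)
  -- dim N = dim M via the Frobenius-semilinear equivalence
  let j : M ≃+ N := AddEquiv.ofBijective
    ({ toFun := fun f => ⟨Θ f, ⟨f, rfl⟩⟩
       map_zero' := Subtype.ext (by simp)
       map_add' := fun f g => Subtype.ext (by simp) } : M →+ N)
    ⟨fun f g hfg => hΘinj (congrArg Subtype.val hfg),
     fun ⟨φ, f, hf⟩ => ⟨f, Subtype.ext hf⟩⟩
  have hrank : Module.rank K M = Module.rank K N := by
    refine rank_eq_of_equiv_equiv (R := K) (R' := K) (M := ↥M) (M₁ := ↥N)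
      (⟨(σ : K → K), map_zero σ⟩ : ZeroHom K K)
      j σ.bijective ?_
    intro r m
    refine Subtype.ext ?_
    show Θ (r • m) = (σ : K →+* K) r • Θ m
    exact Θ.map_smul' r m
  have hfr : Module.finrank K M = Module.finrank K N := by
    simp only [Module.finrank, hrank]
  have hsum := Subspace.finrank_add_finrank_dualCoannihilator_eq N
  rw [← hWN, hdim, ← hfr] at hsum
  omega
end

section
/- Let K be a field of characteristic 2 with |K| ≥ r+1 (or K infinite), V an n-dimensional K-vector space, and M a subspace of Symm(V) with M ∩ Alt(V) = 0 such that every element of M has rank at most r. Then dim M ≤ r. -/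
set_option synthInstance.maxHeartbeats 1000000
set_option maxHeartbeats 1000000

open Polynomial Matrix

lemma natDegree_det_le_sum {K : Type*} [Field K] {ι : Type*} [Fintype ι] [DecidableEq ι]
    (M : Matrix ι ι K[X]) (d : ι → ℕ)
    (h : ∀ i j, (M i j).natDegree ≤ d i) :
    M.det.natDegree ≤ ∑ i, d i := by
  rw [Matrix.det_apply']
  apply Polynomial.natDegree_sum_le_of_forall_le
  intro σ _
  refine (Polynomial.natDegree_mul_le).trans ?_
  have h1 : (Polynomial.natDegree (Equiv.Perm.sign σ : K[X])) = 0 := by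
    rcases Int.units_eq_one_or (Equiv.Perm.sign σ) with hs | hs <;> simp [hs]
  rw [h1, zero_add]
  refine (Polynomial.natDegree_prod_le _ _).trans ?_
  calc ∑ i, (M (σ i) i).natDegree ≤ ∑ i, d (σ i) :=
        Finset.sum_le_sum fun i _ => h _ _
    _ = ∑ i, d i := Equiv.sum_comp σ d

lemma det_gram_eq_zero {K V : Type*} [Field K] [AddCommGroup V] [Module K V]
    [FiniteDimensional K V] {ι : Type*} [Fintype ι] [DecidableEq ι]
    (h : V →ₗ[K] V →ₗ[K] K) (v : ι → V)
    (hr : Module.finrank K (LinearMap.range h) < Fintype.card ι) :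
    (Matrix.of fun i j => h (v i) (v j)).det = 0 := by
  by_contra hdet
  have hli : LinearIndependent K (fun i => h (v i)) := by
    rw [Fintype.linearIndependent_iff]
    intro g hg
    have hvm : Matrix.vecMul g (Matrix.of fun i j => h (v i) (v j)) = 0 := by
      funext j
      have := congrArg (fun φ => φ (v j)) hg
      simpa [Matrix.vecMul, dotProduct, LinearMap.sum_apply, smul_eq_mul] using this
    have hg0 : g = 0 := by
      by_contra h0
      exact hdet (Matrix.exists_vecMul_eq_zero_iff.mp ⟨g, h0, hvm⟩)
    intro i; rw [hg0]; rfl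
  have hle : Fintype.card ι ≤ Module.finrank K (LinearMap.range h) := by
    have hmem : ∀ i, h (v i) ∈ LinearMap.range h := fun i => LinearMap.mem_range_self _ _
    have hli' : LinearIndependent K (fun i => (⟨h (v i), hmem i⟩ : LinearMap.range h)) := by
      apply LinearIndependent.of_comp (LinearMap.range h).subtype
      exact hli
    exact hli'.fintype_card_le_finrank
  omega

lemma key_lemma {K V : Type*} [Field K] [AddCommGroup V] [Module K V]
    [FiniteDimensional K V] {s : ℕ}
    (hcard : ((s : Cardinal) + 1) ≤ Cardinal.mk K)
    (f g : V →ₗ[K] V →ₗ[K] K)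
    (hmax : ∀ α : K, Module.finrank K (LinearMap.range (α • f + g)) ≤ s)
    (w : Fin s → V) (u : V)
    (hA : (Matrix.of fun i j => f (w i) (w j)).det ≠ 0)
    (hu1 : ∀ x, f x u = 0) (hu2 : f u = 0) :
    g u u = 0 := by
  classical
  set A : Matrix (Fin s) (Fin s) K := Matrix.of fun i j => f (w i) (w j) with hAdef
  set A' : Matrix (Fin s) (Fin s) K := Matrix.of fun i j => g (w i) (w j) with hA'def
  set T : Matrix (Fin s) (Fin s) K[X] := (X : K[X]) • A.map C + A'.map C with hTdef
  set Bb : Matrix (Fin s) Unit K[X] := Matrix.of fun i _ => C (g (w i) u) with hBbdef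
  set Cb : Matrix Unit (Fin s) K[X] := Matrix.of fun _ j => C (g u (w j)) with hCbdef
  set Db : Matrix Unit Unit K[X] := Matrix.of fun _ _ => C (g u u) with hDbdef
  set N : Matrix (Fin s ⊕ Unit) (Fin s ⊕ Unit) K[X] := Matrix.fromBlocks T Bb Cb Db with hNdef
  -- entry degree bounds
  have hT1 : ∀ i j, (T i j).natDegree ≤ 1 := by
    intro i j
    have : T i j = X * C (A i j) + C (A' i j) := by
      simp [hTdef, Matrix.add_apply, Matrix.smul_apply, smul_eq_mul, Matrix.map_apply]
    rw [this]
    refine (Polynomial.natDegree_add_le _ _).trans ?_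
    simp
    refine (Polynomial.natDegree_mul_le).trans ?_
    simp
  -- Step A : N.det = 0
  have hp0 : N.det = 0 := by
    apply Polynomial.eq_zero_of_forall_eval_zero_of_natDegree_lt_card
    · intro α
      have hmapdet := (Polynomial.evalRingHom α).map_det N
      rw [RingHom.mapMatrix_apply] at hmapdet
      have hmap : N.map (Polynomial.evalRingHom α) =
          Matrix.of fun i j => (α • f + g) (Sum.elim w (fun _ => u) i)
            (Sum.elim w (fun _ => u) j) := by
        ext i j
        rcases i with i | i <;> rcases j with j | j <;>
          simp [hNdef, hTdef, hBbdef, hCbdef, hDbdef, Matrix.fromBlocks, Matrix.map_apply,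
            hAdef, hA'def, hu1, hu2, LinearMap.add_apply, LinearMap.smul_apply, smul_eq_mul] <;>
          ring
      have := det_gram_eq_zero (ι := Fin s ⊕ Unit) (α • f + g) (Sum.elim w (fun _ => u))
        (by simp only [Fintype.card_sum, Fintype.card_fin, Fintype.card_unit]; exact Nat.lt_succ_of_le (hmax α))
      rw [hmap] at hmapdet
      rw [show Polynomial.eval α N.det = (Polynomial.evalRingHom α) N.det from rfl, hmapdet, this]
    · have hdeg : N.det.natDegree ≤ s := by
        have := natDegree_det_le_sum N (Sum.elim (fun _ => 1) (fun _ => 0)) ?_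
        · simpa [Fintype.sum_sum_type] using this
        · rintro (i | i) (j | j) <;>
            simp [hNdef, Matrix.fromBlocks, hBbdef, hCbdef, hDbdef, hT1]
      calc (N.det.natDegree : Cardinal) ≤ (s : Cardinal) := by exact_mod_cast hdeg
        _ < (s : Cardinal) + 1 := by
            have : ((s : ℕ) : Cardinal.{u_1}) < ((s + 1 : ℕ) : Cardinal.{u_1}) := by
              rw [Nat.cast_lt]; omega
            simpa using this
        _ ≤ Cardinal.mk K := hcard
  -- Step B : the Schur identity  C (g u u) * T.det = (Cb * adjugate T * Bb) default default
  have hAunit : IsUnit A.det := isUnit_iff_ne_zero.mpr hA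
  set Bm : Matrix (Fin s) (Fin s) K := -(A⁻¹ * A') with hBmdef
  have hT : T = A.map C * charmatrix Bm := by
    have hchar : charmatrix Bm = Matrix.scalar (Fin s) (X : K[X]) - Bm.map C := rfl
    have h2 : A.map C * Matrix.scalar (Fin s) (X : K[X]) = (X : K[X]) • A.map C := by
      ext i j
      rw [Matrix.scalar_apply, Matrix.mul_diagonal]
      simp only [Matrix.smul_apply, smul_eq_mul, Matrix.map_apply]
      ring_nf
    have h3 : (A.map C) * (Bm.map C) = (A * Bm).map C := (Matrix.map_mul).symm
    have h4 : A * Bm = -A' := by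
      rw [hBmdef, Matrix.mul_neg, ← Matrix.mul_assoc, Matrix.mul_nonsing_inv _ hAunit, one_mul]
    have h5 : ((-A' : Matrix (Fin s) (Fin s) K).map C) = -(A'.map C) := by
      ext i j; simp [Matrix.map_apply]
    rw [hchar, Matrix.mul_sub, h2, h3, h4, h5, sub_neg_eq_add, hTdef]
  have hCdetA : (C : K →+* K[X]).mapMatrix A = A.map C := RingHom.mapMatrix_apply _ _
  have hdetT : T.det = C A.det * Bm.charpoly := by
    have := (C : K →+* K[X]).map_det A
    rw [RingHom.mapMatrix_apply] at this
    rw [hT, Matrix.det_mul, ← this]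
    rfl
  have hTne : T.det ≠ 0 := by
    rw [hdetT]
    exact mul_ne_zero (Polynomial.C_ne_zero.mpr hA) (Matrix.charpoly_monic Bm).ne_zero
  have hTdeg : T.det.natDegree = s := by
    rw [hdetT, Polynomial.natDegree_C_mul hA, Matrix.charpoly_natDegree_eq_dim,
      Fintype.card_fin]
  set φ : K[X] →+* RatFunc K := algebraMap K[X] (RatFunc K) with hφdef
  have hφinj : Function.Injective φ := IsFractionRing.injective K[X] (RatFunc K)
  have hTφdet : (T.map φ).det = φ T.det := by
    rw [← RingHom.mapMatrix_apply, ← RingHom.map_det]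
  have hφTdet_ne : φ T.det ≠ 0 := fun hc => hTne (hφinj (by rw [hc, map_zero]))
  haveI : Invertible (T.map φ) :=
    Matrix.invertibleOfIsUnitDet _ (isUnit_iff_ne_zero.mpr (hTφdet ▸ hφTdet_ne))
  have hdet0 : (Matrix.fromBlocks (T.map φ) (Bb.map φ) (Cb.map φ) (Db.map φ)).det = 0 := by
    rw [← Matrix.fromBlocks_map, ← hNdef, ← RingHom.mapMatrix_apply, ← RingHom.map_det, hp0,
      map_zero]
  rw [Matrix.det_fromBlocks₁₁] at hdet0
  have hSchur : (Db.map φ - Cb.map φ * ⅟(T.map φ) * Bb.map φ).det = 0 := by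
    rcases mul_eq_zero.mp hdet0 with hc | hc
    · exact absurd hc (hTφdet ▸ hφTdet_ne)
    · exact hc
  rw [Matrix.det_unique, Matrix.sub_apply] at hSchur
  have hadjφ : Matrix.adjugate (T.map φ) = (Matrix.adjugate T).map φ := by
    rw [← RingHom.mapMatrix_apply, ← RingHom.map_adjugate, RingHom.mapMatrix_apply]
  have hinv : ⅟(T.map φ) = (φ T.det)⁻¹ • ((Matrix.adjugate T).map φ) := by
    rw [Matrix.invOf_eq_nonsing_inv, Matrix.inv_def, Ring.inverse_eq_inv', hTφdet, hadjφ]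
  have hmid : Cb.map φ * ⅟(T.map φ) * Bb.map φ
      = (φ T.det)⁻¹ • ((Cb * Matrix.adjugate T * Bb).map φ) := by
    rw [hinv, Matrix.mul_smul, Matrix.smul_mul]
    congr 1
    rw [Matrix.map_mul, Matrix.map_mul]
  have hE : C (g u u) * T.det = (Cb * Matrix.adjugate T * Bb) default default := by
    apply hφinj
    rw [_root_.map_mul]
    have h6 : φ (Db default default) = (φ T.det)⁻¹ *
        ((Cb * Matrix.adjugate T * Bb).map φ) default default := by
      have := sub_eq_zero.mp hSchur
      rw [Matrix.map_apply] at this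
      rw [this, hmid, Matrix.smul_apply, smul_eq_mul]
    have h7 : Db default default = C (g u u) := rfl
    rw [← h7]
    rw [show φ (Db default default) * φ T.det
        = ((φ T.det)⁻¹ * ((Cb * Matrix.adjugate T * Bb).map φ) default default) * φ T.det by
          rw [← h6]]
    rw [Matrix.map_apply]
    field_simp
  -- Step C : degree contradiction
  by_contra hγ
  rcases Nat.eq_zero_or_pos s with hs | hs
  · have hRHS : (Cb * Matrix.adjugate T * Bb) default default = 0 := by
      subst hs
      simp [Matrix.mul_apply]
    rw [hRHS] at hE
    exact (mul_ne_zero (Polynomial.C_ne_zero.mpr hγ) hTne) hE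
  · have hadj : ∀ i j, ((Matrix.adjugate T) i j).natDegree ≤ s - 1 := by
      intro i j
      rw [Matrix.adjugate_apply]
      refine (natDegree_det_le_sum (T.updateRow j (Pi.single i 1))
        (fun k => if k = j then 0 else 1) ?_).trans ?_
      · intro k l
        rcases eq_or_ne k j with rfl | hk
        · have hTl : T.updateRow k (Pi.single i 1) k l
              = (Pi.single i 1 : Fin s → K[X]) l := by
            rw [Matrix.updateRow_self]
          simp only [hTl, if_pos rfl]
          rcases eq_or_ne l i with rfl | hl
          · simp
          · simp [Pi.single_apply, hl]
        · have hTl : T.updateRow j (Pi.single i 1) k l = T k l := by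
            rw [Matrix.updateRow_apply, if_neg hk]
          simp only [hTl, if_neg hk]
          exact hT1 k l
      · have hcong : ∀ k ∈ Finset.univ.erase j,
            (if k = j then (0:ℕ) else 1) = 1 := by
          intro k hk; rw [if_neg (Finset.ne_of_mem_erase hk)]
        have hsum : (∑ k : Fin s, if k = j then (0:ℕ) else 1) = s - 1 := by
          rw [← Finset.sum_erase_add _ _ (Finset.mem_univ j), if_pos rfl, add_zero,
            Finset.sum_congr rfl hcong, Finset.sum_const, smul_eq_mul, mul_one,
            Finset.card_erase_of_mem (Finset.mem_univ j), Finset.card_univ, Fintype.card_fin]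
        exact le_of_eq hsum
    have hRHSdeg : ((Cb * Matrix.adjugate T * Bb) default default).natDegree ≤ s - 1 := by
      rw [Matrix.mul_apply]
      apply Polynomial.natDegree_sum_le_of_forall_le
      intro j _
      refine (Polynomial.natDegree_mul_le).trans ?_
      have h1 : ((Cb * Matrix.adjugate T) default j).natDegree ≤ s - 1 := by
        rw [Matrix.mul_apply]
        apply Polynomial.natDegree_sum_le_of_forall_le
        intro i _
        refine (Polynomial.natDegree_mul_le).trans ?_
        have : (Cb default i).natDegree = 0 := by
          simp [hCbdef]
        rw [this, zero_add]
        exact hadj i j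
      have h2 : (Bb j default).natDegree = 0 := by
        simp [hBbdef]
      rw [h2, add_zero]
      exact h1
    have hLHSdeg : (C (g u u) * T.det).natDegree = s := by
      rw [Polynomial.natDegree_C_mul hγ, hTdeg]
    rw [hE] at hLHSdeg
    omega

/-- In characteristic 2 with |K| ≥ r + 1 (in particular K infinite), a subspace of
symmetric bilinear forms with no nonzero alternating element in which every element
has rank at most r has dimension at most r. -/
theorem rank_related_dimension_bound {K V : Type*} [Field K] [CharP K 2]
    [AddCommGroup V] [Module K V] [FiniteDimensional K V] (n r : ℕ)
    (hdim : Module.finrank K V = n)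
    (hcard : (r + 1 : Cardinal) ≤ Cardinal.mk K)
    (M : Submodule K (V →ₗ[K] V →ₗ[K] K))
    (hsymm : ∀ f ∈ M, LinearMap.BilinForm.IsSymm f)
    (halt : ∀ f ∈ M, LinearMap.BilinForm.IsAlt f → f = 0)
    (hrank : ∀ f ∈ M, Module.finrank K (LinearMap.range f) ≤ r) :
    Module.finrank K M ≤ r := by
  classical
  set rk : (V →ₗ[K] V →ₗ[K] K) → ℕ := fun f => Module.finrank K (LinearMap.range f) with hrkdef
  set S : Set ℕ := rk '' M with hSdef
  have hSne : S.Nonempty := ⟨rk 0, ⟨0, M.zero_mem, rfl⟩⟩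
  have hSbdd : BddAbove S := by
    refine ⟨r, ?_⟩
    rintro x ⟨f, hf, rfl⟩
    exact hrank f hf
  set s : ℕ := sSup S with hsdef
  obtain ⟨f₀, hf₀M, hf₀s⟩ := Nat.sSup_mem hSne hSbdd
  have hsr : s ≤ r := csSup_le hSne (by rintro x ⟨f, hf, rfl⟩; exact hrank f hf)
  have hmax' : ∀ g ∈ M, rk g ≤ s := fun g hg => le_csSup hSbdd ⟨g, hg, rfl⟩
  have hf₀symm := hsymm f₀ hf₀M
  obtain ⟨W, hW⟩ := Submodule.exists_isCompl (LinearMap.ker f₀)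
  have hWrank : Module.finrank K W = s := by
    have h1 := Submodule.finrank_add_eq_of_isCompl hW
    have h2 := LinearMap.finrank_range_add_finrank_ker f₀
    have h3 : Module.finrank K (LinearMap.range f₀) = s := hf₀s
    omega
  let bW : Module.Basis (Fin s) K W := Module.finBasisOfFinrankEq K W hWrank
  set w : Fin s → V := fun i => (bW i : V) with hwdef
  have hwW : ∀ i, w i ∈ W := fun i => (bW i).2
  have hker : ∀ u ∈ LinearMap.ker f₀, ∀ x, f₀ x u = 0 := by
    intro u hu x
    have h : RingHom.id K (f₀ x u) = f₀ u x := LinearMap.BilinForm.isSymm_def.mp hf₀symm x u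
    rw [LinearMap.mem_ker] at hu
    rw [RingHom.id_apply] at h
    rw [h, hu, LinearMap.zero_apply]
  have hspan : Submodule.span K (Set.range w) = W := by
    have h1 := bW.span_eq
    have h2 : Submodule.map W.subtype (Submodule.span K (Set.range bW))
        = Submodule.span K (Set.range w) := by
      rw [Submodule.map_span]
      congr 1
      ext v
      simp [hwdef, Set.range_comp]
    rw [h1] at h2
    rw [← h2, Submodule.map_top, Submodule.range_subtype]
  have hAdet : (Matrix.of fun i j => f₀ (w i) (w j)).det ≠ 0 := by
    intro hdet
    obtain ⟨a, ha0, hva⟩ := Matrix.exists_vecMul_eq_zero_iff.mpr hdet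
    set x : V := ∑ i, a i • w i with hxdef
    have hxW : x ∈ W := Submodule.sum_mem _ (fun i _ => Submodule.smul_mem _ _ (hwW i))
    have hfx : ∀ j, f₀ x (w j) = 0 := by
      intro j
      have h := congrFun hva j
      simpa [Matrix.vecMul, dotProduct, hxdef, map_sum, LinearMap.sum_apply,
        smul_eq_mul] using h
    have hfxW : ∀ y ∈ W, f₀ x y = 0 := by
      intro y hy
      rw [← hspan] at hy
      induction hy using Submodule.span_induction with
      | mem y hy => obtain ⟨j, rfl⟩ := hy; exact hfx j
      | zero => simp
      | add p q _ _ hp hq => rw [_root_.map_add, hp, hq, add_zero]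
      | smul c p _ hp => rw [_root_.map_smul, hp, smul_zero]
    have hx0 : f₀ x = 0 := by
      ext y
      have hy : y ∈ LinearMap.ker f₀ ⊔ W := by rw [hW.sup_eq_top]; trivial
      obtain ⟨p, hp, q, hq, rfl⟩ := Submodule.mem_sup.mp hy
      rw [map_add, hker p hp x, hfxW q hq, add_zero, LinearMap.zero_apply]
    have hx00 : x = 0 :=
      (Submodule.disjoint_def.mp hW.disjoint) x (LinearMap.mem_ker.mpr hx0) hxW
    have hsum0 : (∑ i, a i • bW i : W) = 0 := by
      have : ((∑ i, a i • bW i : W) : V) = x := by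
        rw [hxdef]
        push_cast
        rfl
      rw [hx00] at this
      exact_mod_cast this
    have := Fintype.linearIndependent_iff.mp bW.linearIndependent a hsum0
    exact ha0 (funext this)
  have hkey : ∀ g ∈ M, ∀ u ∈ LinearMap.ker f₀, g u u = 0 := by
    intro g hg u hu
    refine key_lemma ?_ f₀ g ?_ w u hAdet (hker u hu) (LinearMap.mem_ker.mp hu)
    · have hsc : (s : Cardinal) ≤ (r : Cardinal) := by exact_mod_cast hsr
      calc ((s : Cardinal) + 1) ≤ ((r : Cardinal) + 1) := add_le_add_left hsc 1
        _ ≤ Cardinal.mk K := hcard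
    · intro α
      exact hmax' _ (M.add_mem (M.smul_mem α hf₀M) hg)
  let θ : ↥M →ₗ[K] (Fin s → K) :=
    { toFun := fun g i => (g : V →ₗ[K] V →ₗ[K] K) (w i) (w i)
      map_add' := by intro g h; funext i; simp
      map_smul' := by intro c g; funext i; simp }
  have hθker : ∀ g : ↥M, θ g = 0 → g = 0 := by
    intro g hg0
    have hgw : ∀ i, (g : V →ₗ[K] V →ₗ[K] K) (w i) (w i) = 0 := fun i => congrFun hg0 i
    have hgsymm := hsymm g.1 g.2
    set Sg : Submodule K V :=
      { carrier := {v | (g : V →ₗ[K] V →ₗ[K] K) v v = 0}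
        add_mem' := by
          intro a b ha hb
          simp only [Set.mem_setOf_eq] at ha hb ⊢
          have hsym : (g : V →ₗ[K] V →ₗ[K] K) b a = (g : V →ₗ[K] V →ₗ[K] K) a b := by
            have h : RingHom.id K ((g : V →ₗ[K] V →ₗ[K] K) a b) = (g : V →ₗ[K] V →ₗ[K] K) b a :=
              LinearMap.BilinForm.isSymm_def.mp hgsymm a b
            rw [RingHom.id_apply] at h
            exact h.symm
          have hexp : (g : V →ₗ[K] V →ₗ[K] K) (a + b) (a + b)
              = (g : V →ₗ[K] V →ₗ[K] K) a a
                + ((g : V →ₗ[K] V →ₗ[K] K) a b + (g : V →ₗ[K] V →ₗ[K] K) b a)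
                + (g : V →ₗ[K] V →ₗ[K] K) b b := by
            simp only [_root_.map_add, LinearMap.add_apply]
            ring
          rw [hexp, ha, hb, zero_add, add_zero, hsym, CharTwo.add_self_eq_zero]
        zero_mem' := by simp
        smul_mem' := by
          intro c v hv
          simp only [Set.mem_setOf_eq] at hv ⊢
          simp only [_root_.map_smul, LinearMap.smul_apply]
          rw [hv, smul_zero, smul_zero] }
          with hSgdef
    have halt' : LinearMap.BilinForm.IsAlt (g : V →ₗ[K] V →ₗ[K] K) := by
      intro v
      have hv : v ∈ LinearMap.ker f₀ ⊔ W := by rw [hW.sup_eq_top]; trivial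
      have hle : LinearMap.ker f₀ ⊔ W ≤ Sg := by
        apply sup_le
        · intro u hu
          exact hkey g.1 g.2 u hu
        · rw [← hspan]
          rw [Submodule.span_le]
          rintro _ ⟨i, rfl⟩
          exact hgw i
      exact hle hv
    have : g.1 = 0 := halt g.1 g.2 halt'
    exact Subtype.ext this
  have hθinj : Function.Injective θ := by
    intro a b hab
    have hmem : a.1 + (-1 : K) • b.1 ∈ M := M.add_mem a.2 (M.smul_mem (-1) b.2)
    have h0 := hθker ⟨_, hmem⟩ (by
      funext i
      have := congrFun hab i
      show (a.1 + (-1 : K) • b.1) (w i) (w i) = 0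
      simp only [LinearMap.add_apply, LinearMap.smul_apply, smul_eq_mul]
      change a.1 (w i) (w i) = b.1 (w i) (w i) at this
      rw [this]; ring)
    apply Subtype.ext
    have h1 : a.1 + (-1 : K) • b.1 = 0 := congrArg Subtype.val h0
    ext x y
    have h2 := congrArg (fun φ : V →ₗ[K] V →ₗ[K] K => φ x y) h1
    simp only [LinearMap.add_apply, LinearMap.smul_apply, smul_eq_mul, LinearMap.zero_apply] at h2
    linear_combination h2
  have hfin := LinearMap.finrank_le_finrank_of_injective hθinj
  rw [Module.finrank_fin_fun] at hfin
  exact hfin.trans hsr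
end

section
/- Let a, b be integers with 1 ≤ b ≤ a and let x ≥ 4 be a real number. Define F(x) = ∏_{i=1}^{b} (x^{a−i+1} − 1)/(x^i − 1). Then F(x) < 4·x^{(a−b)b}. -/
open Finset

private lemma sum_inv_le_aux (x : ℝ) (hx : 4 ≤ x) (b : ℕ) :
    ∑ i ∈ Finset.Icc 1 b, (x ^ i)⁻¹ ≤ 1/3 - (x ^ b)⁻¹/3 := by
  have hx0 : (0:ℝ) < x := by linarith
  induction b with
  | zero => simp
  | succ b ih =>
    rw [Finset.sum_Icc_succ_top (by omega : 1 ≤ b + 1)]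
    have hb : (0:ℝ) < x ^ b := pow_pos hx0 b
    have hb1 : (0:ℝ) < x ^ (b+1) := pow_pos hx0 _
    have hxi : x⁻¹ ≤ 4⁻¹ := by
      rw [inv_le_inv₀ hx0 (by norm_num)]; exact hx
    have key : 4 * (x ^ (b+1))⁻¹ ≤ (x ^ b)⁻¹ := by
      rw [pow_succ, mul_inv]
      nlinarith [inv_nonneg.mpr hb.le, mul_le_mul_of_nonneg_left hxi (inv_nonneg.mpr hb.le)]
    linarith

private lemma prod_den_ge_aux (x : ℝ) (hx : 4 ≤ x) (b : ℕ) :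
    (1 - ∑ i ∈ Finset.Icc 1 b, (x ^ i)⁻¹) * x ^ (∑ i ∈ Finset.Icc 1 b, i) ≤
      ∏ i ∈ Finset.Icc 1 b, (x ^ i - 1) := by
  have hx0 : (0:ℝ) < x := by linarith
  induction b with
  | zero => simp
  | succ b ih =>
    rw [Finset.sum_Icc_succ_top (by omega : 1 ≤ b + 1),
        Finset.sum_Icc_succ_top (by omega : 1 ≤ b + 1),
        Finset.prod_Icc_succ_top (by omega : 1 ≤ b + 1)]
    have hb1 : (0:ℝ) < x ^ (b+1) := pow_pos hx0 _
    have h1 : (0:ℝ) ≤ x ^ (b+1) - 1 := by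
      have : (1:ℝ) ≤ x ^ (b+1) := one_le_pow₀ (by linarith)
      linarith
    have hS : (0:ℝ) ≤ ∑ i ∈ Finset.Icc 1 b, (x ^ i)⁻¹ :=
      Finset.sum_nonneg fun i _ => inv_nonneg.mpr (pow_pos hx0 i).le
    have hA : (0:ℝ) < x ^ (∑ i ∈ Finset.Icc 1 b, i) := pow_pos hx0 _
    calc (1 - (∑ i ∈ Finset.Icc 1 b, (x ^ i)⁻¹ + (x ^ (b+1))⁻¹)) *
          x ^ (∑ i ∈ Finset.Icc 1 b, i + (b+1))
        ≤ (1 - ∑ i ∈ Finset.Icc 1 b, (x ^ i)⁻¹) *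
            x ^ (∑ i ∈ Finset.Icc 1 b, i) * (x ^ (b+1) - 1) := by
          rw [pow_add x (∑ i ∈ Finset.Icc 1 b, i) (b+1)]
          have hBi : x ^ (b+1) * (x ^ (b+1))⁻¹ = 1 := mul_inv_cancel₀ hb1.ne'
          have hABi : x ^ (∑ i ∈ Finset.Icc 1 b, i) * (x ^ (b+1) * (x ^ (b+1))⁻¹)
              = x ^ (∑ i ∈ Finset.Icc 1 b, i) := by rw [hBi, mul_one]
          nlinarith [mul_nonneg hS hA.le, hA.le, hABi,
            mul_nonneg (mul_nonneg hS hA.le) hb1.le]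
      _ ≤ (∏ i ∈ Finset.Icc 1 b, (x ^ i - 1)) * (x ^ (b+1) - 1) :=
          mul_le_mul_of_nonneg_right ih h1

private lemma sum_exp_aux (a b : ℕ) (hba : b ≤ a) :
    ∑ i ∈ Finset.Icc 1 b, (a - i + 1) = (a - b) * b + ∑ i ∈ Finset.Icc 1 b, i := by
  induction b with
  | zero => simp
  | succ b ih =>
    rw [Finset.sum_Icc_succ_top (by omega : 1 ≤ b + 1),
        Finset.sum_Icc_succ_top (by omega : 1 ≤ b + 1), ih (by omega)]
    have h1 : a - b = (a - (b+1)) + 1 := by omega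
    have h2 : a - (b+1) + 1 = (a - (b+1)) + 1 := rfl
    rw [h1, h2]
    ring

/-- For integers 1 ≤ b ≤ a and real x ≥ 4, the Gaussian binomial coefficient
F(x) = ∏_{i=1}^{b} (x^{a−i+1} − 1)/(x^i − 1) satisfies F(x) < 4 x^{(a−b)b}. -/
theorem advanced_inequality (a b : ℕ) (hb : 1 ≤ b) (hba : b ≤ a)
    (x : ℝ) (hx : 4 ≤ x) :
    (∏ i ∈ Finset.Icc 1 b, (x ^ (a - i + 1) - 1) / (x ^ i - 1)) <
      4 * x ^ ((a - b) * b) := by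
  have hx0 : (0:ℝ) < x := by linarith
  have hx1 : (1:ℝ) < x := by linarith
  have hden : ∀ i ∈ Finset.Icc 1 b, (0:ℝ) < x ^ i - 1 := by
    intro i hi
    have hi1 : 1 ≤ i := (Finset.mem_Icc.mp hi).1
    have : (1:ℝ) < x ^ i := one_lt_pow₀ hx1 (by omega)
    linarith
  have hD : (0:ℝ) < ∏ i ∈ Finset.Icc 1 b, (x ^ i - 1) :=
    Finset.prod_pos hden
  rw [Finset.prod_div_distrib, div_lt_iff₀ hD]
  -- numerator bound
  have hN : (∏ i ∈ Finset.Icc 1 b, (x ^ (a - i + 1) - 1)) ≤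
      x ^ (∑ i ∈ Finset.Icc 1 b, (a - i + 1)) := by
    rw [← Finset.prod_pow_eq_pow_sum]
    refine Finset.prod_le_prod (fun i _ => ?_) (fun i _ => ?_)
    · have : (1:ℝ) ≤ x ^ (a - i + 1) := one_le_pow₀ (by linarith)
      linarith
    · linarith [pow_pos hx0 (a - i + 1)]
  -- denominator bound
  have hSle : ∑ i ∈ Finset.Icc 1 b, (x ^ i)⁻¹ ≤ 1/3 := by
    have := sum_inv_le_aux x hx b
    have : (0:ℝ) ≤ (x ^ b)⁻¹ := inv_nonneg.mpr (pow_pos hx0 b).le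
    linarith [sum_inv_le_aux x hx b]
  have hT : (0:ℝ) < x ^ (∑ i ∈ Finset.Icc 1 b, i) := pow_pos hx0 _
  have hDge : (2/3 : ℝ) * x ^ (∑ i ∈ Finset.Icc 1 b, i) ≤
      ∏ i ∈ Finset.Icc 1 b, (x ^ i - 1) := by
    calc (2/3 : ℝ) * x ^ (∑ i ∈ Finset.Icc 1 b, i)
        ≤ (1 - ∑ i ∈ Finset.Icc 1 b, (x ^ i)⁻¹) * x ^ (∑ i ∈ Finset.Icc 1 b, i) := by
          nlinarith
      _ ≤ _ := prod_den_ge_aux x hx b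
  have hsplit : x ^ (∑ i ∈ Finset.Icc 1 b, (a - i + 1)) =
      x ^ ((a - b) * b) * x ^ (∑ i ∈ Finset.Icc 1 b, i) := by
    rw [← pow_add, sum_exp_aux a b hba]
  have hE : (0:ℝ) < x ^ ((a - b) * b) := pow_pos hx0 _
  have h := mul_le_mul_of_nonneg_left hDge (by positivity : (0:ℝ) ≤ 4 * x ^ ((a - b) * b))
  nlinarith [mul_pos hE hT]
end

section
/- Under the hypotheses of the previous statement (char K = 2, |K| ≥ r+1, r odd, n = 2r, M ⊆ Symm(V) of dimension 3r with all nonzero ranks equal to r or n), if N and N₁ are distinct r-dimensional constant rank r subspaces of M with common radicals U and U₁ respectively, then U ∩ U₁ = 0 and hence V = U ⊕ U₁. -/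
open Module LinearMap

universe u v

private lemma ev_aux (K : Type u) [Field K] (n : ℕ) :
    ∀ {V : Type v} [AddCommGroup V] [Module K V] [FiniteDimensional K V]
      (f : V →ₗ[K] V →ₗ[K] K), (∀ x, f x x = 0) → LinearMap.ker f = ⊥ →
      Module.finrank K V = n → Even n := by
  induction n using Nat.strong_induction_on with
  | _ n IH =>
    intro V _ _ _ f halt hker hrk
    have hskew : ∀ a b, f a b = - f b a := by
      intro a b
      have h := halt (a + b)
      simp only [map_add, LinearMap.add_apply, halt a, halt b, zero_add, add_zero] at h
      exact eq_neg_of_add_eq_zero_right h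
    rcases Nat.eq_zero_or_pos n with hn | hn
    · simp [hn]
    · have : Nontrivial V := by
        rw [← Module.finrank_pos_iff (R := K)]; omega
      obtain ⟨x, hx⟩ := exists_ne (0 : V)
      have hfx : f x ≠ 0 := fun h => hx (LinearMap.ker_eq_bot.mp hker (by simp [h]))
      obtain ⟨y₀, hy₀⟩ : ∃ y₀, f x y₀ ≠ 0 := by
        by_contra hc
        push_neg at hc
        exact hfx (LinearMap.ext hc)
      set y := (f x y₀)⁻¹ • y₀ with hy
      have hxy : f x y = 1 := by
        simp [hy, map_smul, smul_eq_mul, inv_mul_cancel₀ hy₀]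
      have hyx : f y x = -1 := by rw [hskew, hxy]
      set Φ := (f x).prod (f y) with hΦ
      have hsurj : LinearMap.range Φ = ⊤ := by
        rw [LinearMap.range_eq_top]
        rintro ⟨s, t⟩
        refine ⟨s • y - t • x, ?_⟩
        simp [hΦ, LinearMap.prod_apply, map_smul, map_sub, hxy, hyx, halt, smul_eq_mul]
      have hrn := LinearMap.finrank_range_add_finrank_ker Φ
      rw [hsurj] at hrn
      have h2 : Module.finrank K (⊤ : Submodule K (K × K)) = 2 := by
        rw [finrank_top, Module.finrank_prod, Module.finrank_self]
      rw [h2, hrk] at hrn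
      set W := LinearMap.ker Φ with hW
      have hmemW : ∀ z : V, z ∈ W ↔ f x z = 0 ∧ f y z = 0 := by
        intro z
        simp [hW, hΦ, LinearMap.mem_ker, Pi.prod, Prod.ext_iff]
      let fr : W →ₗ[K] W →ₗ[K] K := LinearMap.BilinForm.restrict f W
      have hfr_apply : ∀ a b : W, fr a b = f a b := fun a b => rfl
      have hfr_alt : ∀ z : W, fr z z = 0 := fun z => halt z
      have hfr_ker : LinearMap.ker fr = ⊥ := by
        rw [LinearMap.ker_eq_bot']
        intro z hz
        have hzx : f x (z : V) = 0 := ((hmemW z).mp z.2).1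
        have hzy : f y (z : V) = 0 := ((hmemW z).mp z.2).2
        have hz0 : f (z : V) = 0 := by
          ext v
          have hw : v + (f y v) • x - (f x v) • y ∈ W := by
            rw [hmemW]
            constructor
            · simp [map_add, map_sub, map_smul, halt, hxy, smul_eq_mul]
            · simp [map_add, map_sub, map_smul, halt, hyx, smul_eq_mul]
          have h0 : f (z : V) (v + (f y v) • x - (f x v) • y) = 0 := by
            have := DFunLike.congr_fun hz (⟨_, hw⟩ : W)
            simpa [hfr_apply] using this
          have hzx' : f (z : V) x = 0 := by rw [hskew]; simp [hzx]
          have hzy' : f (z : V) y = 0 := by rw [hskew]; simp [hzy]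
          simp only [map_add, map_sub, map_smul, smul_eq_mul, hzx', hzy',
            mul_zero, add_zero, sub_zero, LinearMap.zero_apply] at h0 ⊢
          exact h0
        have : (z : V) = 0 := by
          have := hker ▸ (LinearMap.mem_ker.mpr hz0)
          simpa using this
        exact Subtype.ext this
      have heven := IH (Module.finrank K W) (by omega) fr hfr_alt hfr_ker rfl
      have : n = Module.finrank K W + 2 := by omega
      rw [this]
      exact heven.add even_two

private lemma even_rank_of_alt {K : Type u} {V : Type v} [Field K] [AddCommGroup V] [Module K V]
    [FiniteDimensional K V] (f : V →ₗ[K] V →ₗ[K] K)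
    (hs : ∀ x y, f x y = f y x) (halt : ∀ x, f x x = 0) :
    Even (Module.finrank K (LinearMap.range f)) := by
  obtain ⟨C, hC⟩ := Submodule.exists_isCompl (LinearMap.ker f)
  let fr : C →ₗ[K] C →ₗ[K] K := LinearMap.BilinForm.restrict f C
  have hfr_apply : ∀ a b : C, fr a b = f a b := fun a b => rfl
  have hfr_ker : LinearMap.ker fr = ⊥ := by
    rw [LinearMap.ker_eq_bot']
    intro z hz
    have hz0 : f (z : V) = 0 := by
      ext v
      obtain ⟨u, hu, c, hc, rfl⟩ := Submodule.mem_sup.mp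
        (hC.codisjoint.eq_top ▸ Submodule.mem_top : v ∈ LinearMap.ker f ⊔ C)
      have h1 : f (z : V) u = 0 := by
        rw [hs]
        rw [LinearMap.mem_ker] at hu
        simp [hu]
      have h2 : f (z : V) c = 0 := by
        have := DFunLike.congr_fun hz (⟨c, hc⟩ : C)
        simpa [hfr_apply] using this
      simp [map_add, h1, h2]
    have : (z : V) ∈ LinearMap.ker f ⊓ C := ⟨LinearMap.mem_ker.mpr hz0, z.2⟩
    rw [hC.disjoint.eq_bot] at this
    exact Subtype.ext (by simpa using this)
  have heven := ev_aux K (Module.finrank K C) fr (fun z => halt z) hfr_ker rfl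
  have h1 := LinearMap.finrank_range_add_finrank_ker f
  have h2 := Submodule.finrank_add_eq_of_isCompl hC
  have : Module.finrank K (LinearMap.range f) = Module.finrank K C := by omega
  rwa [this]

private lemma semi_vanish {K : Type u} {V : Type v} [Field K] [AddCommGroup V] [Module K V]
    {U C : Submodule K V} (hC : IsCompl U C) {ι : Type*} (b : Basis ι K C) (D : V → K)
    (hadd : ∀ x y, D (x + y) = D x + D y) (hsmul : ∀ (c : K) (x : V), D (c • x) = c ^ 2 * D x)
    (hUv : ∀ u ∈ U, D u = 0) (hb : ∀ i, D (b i) = 0) : ∀ x, D x = 0 := by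
  let DH : V →+ K := AddMonoidHom.mk' D hadd
  let E : C →+ K := DH.comp C.subtype.toAddMonoidHom
  have hE : ∀ z : C, E z = D z := fun z => rfl
  have hC0 : ∀ z : C, D (z : V) = 0 := by
    intro z
    rw [← hE]
    rw [← b.linearCombination_repr z, Finsupp.linearCombination_apply]
    rw [map_finsuppSum]
    apply Finset.sum_eq_zero
    intro i _
    show E ((b.repr z) i • b i) = 0
    have : E ((b.repr z) i • b i) = ((b.repr z) i) ^ 2 * D (b i) := by
      rw [hE]
      push_cast [Submodule.coe_smul]
      exact hsmul _ _
    rw [this, hb i, mul_zero]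
  intro x
  obtain ⟨u, hu, c, hc, rfl⟩ := Submodule.mem_sup.mp
    (hC.codisjoint.eq_top ▸ Submodule.mem_top : x ∈ U ⊔ C)
  rw [hadd, hUv u hu, hC0 ⟨c, hc⟩, add_zero]

private lemma key_surj {K : Type u} {V : Type v} [Field K] [CharP K 2] [AddCommGroup V]
    [Module K V] [FiniteDimensional K V] (r : ℕ) (hrodd : Odd r)
    (N' : Submodule K (V →ₗ[K] V →ₗ[K] K))
    (hsymmN : ∀ f ∈ N', LinearMap.BilinForm.IsSymm f)
    (hdimN : Module.finrank K N' = r)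
    (hrkN : ∀ f ∈ N', f ≠ 0 → Module.finrank K (LinearMap.range f) = r)
    (U' : Submodule K V)
    (hU : ∀ f ∈ N', f ≠ 0 → LinearMap.ker f = U')
    (C : Submodule K V) (hC : IsCompl U' C) (cB : Basis (Fin r) K C) (t : Fin r → K) :
    ∃ g ∈ N', ∀ j, g (cB j) (cB j) = t j := by
  let L : N' →ₗ[K] (Fin r → K) :=
    { toFun := fun g => fun j => (g : V →ₗ[K] V →ₗ[K] K) (cB j) (cB j)
      map_add' := by intro g h; funext j; simp
      map_smul' := by intro c g; funext j; simp }
  have hLapp : ∀ (g : N') (j : Fin r), L g j = (g : V →ₗ[K] V →ₗ[K] K) (cB j) (cB j) :=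
    fun g j => rfl
  have hker : ∀ g : N', L g = 0 → g = 0 := by
    intro g hg
    by_contra hg0
    have hgne : (g : V →ₗ[K] V →ₗ[K] K) ≠ 0 := fun h => hg0 (Subtype.ext h)
    have hgs : ∀ a b, (g : V →ₗ[K] V →ₗ[K] K) a b = (g : V →ₗ[K] V →ₗ[K] K) b a := by
      intro a b
      simpa using ((hsymmN (g : V →ₗ[K] V →ₗ[K] K) g.2).eq a b)
    have halt : ∀ x, (g : V →ₗ[K] V →ₗ[K] K) x x = 0 := by
      apply semi_vanish hC cB (fun x => (g : V →ₗ[K] V →ₗ[K] K) x x)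
      · intro x y
        simp only [map_add, LinearMap.add_apply]
        have h2 : (g : V →ₗ[K] V →ₗ[K] K) x y + (g : V →ₗ[K] V →ₗ[K] K) y x = 0 := by
          rw [hgs y x]
          exact CharTwo.add_self_eq_zero _
        linear_combination h2
      · intro c x
        simp only [map_smul, LinearMap.smul_apply, smul_eq_mul]
        ring
      · intro u hu
        have : (g : V →ₗ[K] V →ₗ[K] K) u = 0 := by
          rw [← LinearMap.mem_ker, hU (g : V →ₗ[K] V →ₗ[K] K) g.2 hgne]
          exact hu
        simp [this]
      · intro j
        have := congrFun hg j
        rw [hLapp] at this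
        exact this
    have heven := even_rank_of_alt (g : V →ₗ[K] V →ₗ[K] K) hgs halt
    rw [hrkN (g : V →ₗ[K] V →ₗ[K] K) g.2 hgne] at heven
    exact (Nat.not_even_iff_odd.mpr hrodd) heven
  letI : AddCommGroup N' := Submodule.addCommGroup (M := V →ₗ[K] V →ₗ[K] K) N'
  have hinj : Function.Injective L := by
    intro a b hab
    have := hker (a - b) (by rw [show L (a - b) = L a - L b from L.map_sub a b, hab, sub_self])
    exact sub_eq_zero.mp this
  have hsurjL : Function.Surjective L :=
    (LinearMap.injective_iff_surjective_of_finrank_eq_finrank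
      (by rw [hdimN, Module.finrank_fin_fun])).mp hinj
  obtain ⟨g, hg⟩ := hsurjL t
  exact ⟨(g : V →ₗ[K] V →ₗ[K] K), g.2, fun j => by rw [← hLapp, hg]⟩


/-- Under the hypotheses of the previous statement, if U and U₁ are the common
radicals of the nonzero elements of N and N₁ respectively, then U ∩ U₁ = 0 and
V = U ⊕ U₁. -/
theorem common_radicals_complementary
    {K V : Type*} [Field K] [CharP K 2]
    [AddCommGroup V] [Module K V] [FiniteDimensional K V] (r : ℕ)
    (hcard : (r + 1 : Cardinal) ≤ Cardinal.mk K) (hrodd : Odd r)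
    (hdim : Module.finrank K V = 2 * r)
    (M : Submodule K (V →ₗ[K] V →ₗ[K] K))
    (hsymm : ∀ f ∈ M, LinearMap.BilinForm.IsSymm f)
    (hdimM : Module.finrank K M = 3 * r)
    (hrank : ∀ f ∈ M, f ≠ 0 → Module.finrank K (LinearMap.range f) = r ∨
      Module.finrank K (LinearMap.range f) = 2 * r)
    (N N₁ : Submodule K (V →ₗ[K] V →ₗ[K] K))
    (hNM : N ≤ M) (hN₁M : N₁ ≤ M) (hne : N ≠ N₁)
    (hdimN : Module.finrank K N = r) (hdimN₁ : Module.finrank K N₁ = r)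
    (hrkN : ∀ f ∈ N, f ≠ 0 → Module.finrank K (LinearMap.range f) = r)
    (hrkN₁ : ∀ f ∈ N₁, f ≠ 0 → Module.finrank K (LinearMap.range f) = r)
    (U U₁ : Submodule K V)
    (hU : ∀ f ∈ N, f ≠ 0 → LinearMap.ker f = U)
    (hU₁ : ∀ f ∈ N₁, f ≠ 0 → LinearMap.ker f = U₁) :
    U ⊓ U₁ = ⊥ ∧ U ⊔ U₁ = ⊤ := by
  have hr1 : 1 ≤ r := hrodd.pos
  -- kernels kill everything in U resp U₁
  have hker0N : ∀ f ∈ N, ∀ u ∈ U, f u = 0 := by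
    intro f hf u hu
    by_cases h0 : f = 0
    · simp [h0]
    · rw [← LinearMap.mem_ker, hU f hf h0]; exact hu
  have hker0N₁ : ∀ f ∈ N₁, ∀ u ∈ U₁, f u = 0 := by
    intro f hf u hu
    by_cases h0 : f = 0
    · simp [h0]
    · rw [← LinearMap.mem_ker, hU₁ f hf h0]; exact hu
  -- dimensions of U, U₁
  have hNbot : N ≠ ⊥ := by
    intro h
    rw [h, finrank_bot] at hdimN
    omega
  obtain ⟨g₀, hg₀N, hg₀⟩ := Submodule.ne_bot_iff N |>.mp hNbot
  have hUr : Module.finrank K U = r := by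
    have h1 := LinearMap.finrank_range_add_finrank_ker g₀
    rw [hrkN g₀ hg₀N hg₀, hU g₀ hg₀N hg₀, hdim] at h1
    omega
  have hN₁bot : N₁ ≠ ⊥ := by
    intro h
    rw [h, finrank_bot] at hdimN₁
    omega
  obtain ⟨g₁, hg₁N, hg₁⟩ := Submodule.ne_bot_iff N₁ |>.mp hN₁bot
  have hU₁r : Module.finrank K U₁ = r := by
    have h1 := LinearMap.finrank_range_add_finrank_ker g₁
    rw [hrkN₁ g₁ hg₁N hg₁, hU₁ g₁ hg₁N hg₁, hdim] at h1
    omega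
  -- main claim
  have hinf : U ⊓ U₁ = ⊥ := by
    by_contra hbot
    obtain ⟨v, hvmem, hv0⟩ := Submodule.ne_bot_iff _ |>.mp hbot
    have hvU : v ∈ U := hvmem.1
    have hvU₁ : v ∈ U₁ := hvmem.2
    -- any nonzero element of M with a kernel vector has rank r
    have hrankr : ∀ f ∈ M, f ≠ 0 → ∀ w, w ≠ 0 → f w = 0 →
        Module.finrank K (LinearMap.range f) = r := by
      intro f hf hf0 w hw0 hfw
      rcases hrank f hf hf0 with h | h
      · exact h
      · exfalso
        have h1 := LinearMap.finrank_range_add_finrank_ker f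
        rw [h, hdim] at h1
        have : LinearMap.ker f = ⊥ := Submodule.finrank_eq_zero.mp (by omega)
        have : w ∈ (⊥ : Submodule K V) := this ▸ LinearMap.mem_ker.mpr hfw
        simp at this
        exact hw0 this
    -- an alternating nonzero element of M with a kernel vector is impossible
    have contra : ∀ f ∈ M, f ≠ 0 → ∀ w, w ≠ 0 → f w = 0 → (∀ x, f x x = 0) → False := by
      intro f hf hf0 w hw0 hfw halt
      have hgs : ∀ a b, f a b = f b a := by
        intro a b
        simpa using ((hsymm f hf).eq a b)
      have heven := even_rank_of_alt f hgs halt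
      rw [hrankr f hf hf0 w hw0 hfw] at heven
      exact (Nat.not_even_iff_odd.mpr hrodd) heven
    -- complements and bases
    obtain ⟨C, hC⟩ := Submodule.exists_isCompl U
    have hCr : Module.finrank K C = r := by
      have := Submodule.finrank_add_eq_of_isCompl hC
      rw [hUr, hdim] at this
      omega
    let cB : Basis (Fin r) K C := (Module.finBasis K C).reindex (finCongr hCr)
    obtain ⟨C₁, hC₁⟩ := Submodule.exists_isCompl U₁
    have hC₁r : Module.finrank K C₁ = r := by
      have := Submodule.finrank_add_eq_of_isCompl hC₁
      rw [hU₁r, hdim] at this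
      omega
    let c₁B : Basis (Fin r) K C₁ := (Module.finBasis K C₁).reindex (finCongr hC₁r)
    -- the functional φ vanishing on U ⊔ U₁
    have hsupne : U ⊔ U₁ ≠ ⊤ := by
      intro h
      have h1 := Submodule.finrank_sup_add_finrank_inf_eq U U₁
      have h2 : Module.finrank K ↥(U ⊓ U₁) ≠ 0 := by
        intro h2
        exact hbot (Submodule.finrank_eq_zero.mp h2)
      rw [h, finrank_top, hdim, hUr, hU₁r] at h1
      omega
    have hQne : Module.finrank K (V ⧸ (U ⊔ U₁)) ≠ 0 := by
      intro h
      have h1 := Submodule.finrank_quotient_add_finrank (U ⊔ U₁)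
      rw [h, zero_add] at h1
      exact hsupne (Submodule.eq_top_of_finrank_eq (by rw [h1]))
    let qB := Module.finBasis K (V ⧸ (U ⊔ U₁))
    let i0 : Fin (Module.finrank K (V ⧸ (U ⊔ U₁))) := ⟨0, Nat.pos_of_ne_zero hQne⟩
    let φ : V →ₗ[K] K := (qB.coord i0) ∘ₗ (U ⊔ U₁).mkQ
    obtain ⟨x₀, hx₀⟩ : ∃ x₀, (U ⊔ U₁).mkQ x₀ = qB i0 := (U ⊔ U₁).mkQ_surjective _
    have hφx₀ : φ x₀ = 1 := by
      simp [φ, hx₀, Basis.coord_apply, Basis.repr_self]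
    have hφU : ∀ u ∈ U, φ u = 0 := by
      intro u hu
      have : (U ⊔ U₁).mkQ u = 0 := (Submodule.Quotient.mk_eq_zero _).mpr (Submodule.mem_sup_left hu)
      simp [φ, this]
    have hφU₁ : ∀ u ∈ U₁, φ u = 0 := by
      intro u hu
      have : (U ⊔ U₁).mkQ u = 0 :=
        (Submodule.Quotient.mk_eq_zero _).mpr (Submodule.mem_sup_right hu)
      simp [φ, this]
    -- first pair g, h'
    obtain ⟨g, hgN, hgB⟩ := key_surj r hrodd N (fun f hf => hsymm f (hNM hf)) hdimN hrkN U hU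
      C hC cB (fun j => (φ (cB j)) ^ 2)
    have hgq : ∀ x, g x x = (φ x) ^ 2 := by
      have := semi_vanish hC cB (fun x => g x x - (φ x) ^ 2) ?_ ?_ ?_ ?_
      · intro x
        have h := this x
        simpa [sub_eq_zero] using h
      · intro x y
        have hgs : g y x = g x y := by simpa using ((hsymm g (hNM hgN)).eq y x)
        have h2 : (2 : K) = 0 := CharTwo.two_eq_zero
        simp only [map_add, LinearMap.add_apply]
        linear_combination hgs + (g x y - φ x * φ y) * h2
      · intro c x
        simp only [map_smul, LinearMap.smul_apply, smul_eq_mul]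
        ring
      · intro u hu
        show g u u - φ u ^ 2 = 0
        rw [hker0N g hgN u hu]
        simp [hφU u hu]
      · intro j
        show g (cB j) (cB j) - φ (cB j) ^ 2 = 0
        rw [hgB j]
        ring
    obtain ⟨h', hh'N₁, hh'B⟩ := key_surj r hrodd N₁ (fun f hf => hsymm f (hN₁M hf)) hdimN₁ hrkN₁
      U₁ hU₁ C₁ hC₁ c₁B (fun j => (φ (c₁B j)) ^ 2)
    have hh'q : ∀ x, h' x x = (φ x) ^ 2 := by
      have := semi_vanish hC₁ c₁B (fun x => h' x x - (φ x) ^ 2) ?_ ?_ ?_ ?_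
      · intro x
        have h := this x
        simpa [sub_eq_zero] using h
      · intro x y
        have hgs : h' y x = h' x y := by simpa using ((hsymm h' (hN₁M hh'N₁)).eq y x)
        have h2 : (2 : K) = 0 := CharTwo.two_eq_zero
        simp only [map_add, LinearMap.add_apply]
        linear_combination hgs + (h' x y - φ x * φ y) * h2
      · intro c x
        simp only [map_smul, LinearMap.smul_apply, smul_eq_mul]
        ring
      · intro u hu
        show h' u u - φ u ^ 2 = 0
        rw [hker0N₁ h' hh'N₁ u hu]
        simp [hφU₁ u hu]
      · intro j
        show h' (c₁B j) (c₁B j) - φ (c₁B j) ^ 2 = 0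
        rw [hh'B j]
        ring
    have hg0 : g ≠ 0 := by
      intro h
      have := hgq x₀
      rw [h, hφx₀] at this
      simp at this
    have hh'0 : h' ≠ 0 := by
      intro h
      have := hh'q x₀
      rw [h, hφx₀] at this
      simp at this
    by_cases hgh : g + h' = 0
    · -- then g = h' and U = U₁
      have hgeq : g = h' := by
        have h1 : g = -h' := eq_neg_of_add_eq_zero_left (G := V →ₗ[K] V →ₗ[K] K) hgh
        rw [h1, ← neg_one_smul K h', show (-1 : K) = 1 from CharTwo.neg_eq 1, one_smul]
      have hUeq : U = U₁ := by
        rw [← hU g hgN hg0, hgeq, hU₁ h' hh'N₁ hh'0]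
      -- pick h ∈ N₁ \ N
      have hnle : ¬ N₁ ≤ N := by
        intro hle
        exact hne (Submodule.eq_of_le_of_finrank_le (V := V →ₗ[K] V →ₗ[K] K) hle (by rw [hdimN, hdimN₁])).symm
      obtain ⟨h, hhN₁, hhN⟩ := SetLike.not_le_iff_exists.mp hnle
      obtain ⟨g₂, hg₂N, hg₂B⟩ := key_surj r hrodd N (fun f hf => hsymm f (hNM hf)) hdimN hrkN U hU
        C hC cB (fun j => h (cB j) (cB j))
      have hq2 : ∀ x, g₂ x x = h x x := by
        have := semi_vanish hC cB (fun x => g₂ x x - h x x) ?_ ?_ ?_ ?_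
        · intro x
          have hx := this x
          simpa [sub_eq_zero] using hx
        · intro x y
          have hgs : g₂ y x = g₂ x y := by simpa using ((hsymm g₂ (hNM hg₂N)).eq y x)
          have hhs : h y x = h x y := by simpa using ((hsymm h (hN₁M hhN₁)).eq y x)
          have h2 : (2 : K) = 0 := CharTwo.two_eq_zero
          simp only [map_add, LinearMap.add_apply]
          linear_combination hgs - hhs + (g₂ x y - h x y) * h2
        · intro c x
          simp only [map_smul, LinearMap.smul_apply, smul_eq_mul]
          ring
        · intro u hu
          show g₂ u u - h u u = 0
          rw [hker0N g₂ hg₂N u hu, hker0N₁ h hhN₁ u (hUeq ▸ hu)]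
          simp
        · intro j
          show g₂ (cB j) (cB j) - h (cB j) (cB j) = 0
          rw [hg₂B j]
          ring
      have hf₂0 : g₂ + h ≠ 0 := by
        intro e
        have h1 : h = -g₂ := eq_neg_of_add_eq_zero_right (α := V →ₗ[K] V →ₗ[K] K) e
        rw [h1] at hhN
        exact hhN (Submodule.neg_mem (M := V →ₗ[K] V →ₗ[K] K) N hg₂N)
      have hf₂M : g₂ + h ∈ M := M.add_mem (hNM hg₂N) (hN₁M hhN₁)
      have hU0 : U ≠ ⊥ := by
        intro e
        rw [e, finrank_bot] at hUr
        omega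
      obtain ⟨u₀, hu₀U, hu₀⟩ := Submodule.ne_bot_iff U |>.mp hU0
      refine contra (g₂ + h) hf₂M hf₂0 u₀ hu₀ ?_ ?_
      · rw [LinearMap.add_apply, hker0N g₂ hg₂N u₀ hu₀U, hker0N₁ h hhN₁ u₀ (hUeq ▸ hu₀U),
          add_zero]
      · intro x
        simp only [LinearMap.add_apply, hq2 x]
        exact CharTwo.add_self_eq_zero _
    · -- f = g + h' ≠ 0 is alternating of rank r: contradiction
      have hfM : g + h' ∈ M := M.add_mem (hNM hgN) (hN₁M hh'N₁)
      refine contra (g + h') hfM hgh v hv0 ?_ ?_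
      · rw [LinearMap.add_apply, hker0N g hgN v hvU, hker0N₁ h' hh'N₁ v hvU₁, add_zero]
      · intro x
        simp only [LinearMap.add_apply, hgq x, hh'q x]
        exact CharTwo.add_self_eq_zero _
  refine ⟨hinf, ?_⟩
  have h1 := Submodule.finrank_sup_add_finrank_inf_eq U U₁
  rw [hinf, finrank_bot, hUr, hU₁r, add_zero] at h1
  exact Submodule.eq_top_of_finrank_eq (by rw [h1, hdim]; ring)
end

section
/- Let char K = 2, r odd, n = 2r, V of dimension n, and let g, g₁ be symmetric bilinear forms on V with V = U ⊕ U₁, where U = rad g ≠ rad g₁ = U₁ are r-dimensional, and g, g₁ each have rank r. Then g + g₁ has rank n = 2r and is not alternating. -/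
open Module LinearMap LinearMap.BilinForm

private lemma even_of_alt_nondeg : ∀ (n : ℕ) {K V : Type*} [Field K] [AddCommGroup V]
    [Module K V] [FiniteDimensional K V] (B : LinearMap.BilinForm K V),
    Module.finrank K V = n → B.IsAlt → B.Nondegenerate → Even n := by
  intro n
  induction n using Nat.strong_induction_on with
  | _ n ih =>
    intro K V _ _ _ _ B hn halt hnd
    rcases Nat.eq_zero_or_pos n with h0 | hpos
    · simp [h0]
    have hpos' : 0 < Module.finrank K V := hn ▸ hpos
    obtain ⟨x, hx⟩ : ∃ x : V, x ≠ 0 := by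
      have : Nontrivial V := Module.nontrivial_of_finrank_pos hpos'
      exact exists_ne 0
    obtain ⟨y, hxy⟩ : ∃ y, B x y ≠ 0 := by
      by_contra h; push_neg at h; exact hx (hnd.1 x h)
    have hBrefl : B.IsRefl := halt.isRefl
    have hyx : B y x ≠ 0 := by rw [← LinearMap.IsAlt.neg halt x y]; simpa using hxy
    have hli : LinearIndependent K ![x, y] := by
      refine (LinearIndependent.pair_iff' hx).mpr fun a hay => ?_
      apply hxy
      rw [← hay, map_smul, smul_eq_mul, LinearMap.IsAlt.self_eq_zero halt, mul_zero]
    set P : Submodule K V := Submodule.span K {x, y} with hPdef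
    have hxP : x ∈ P := Submodule.subset_span (by simp)
    have hyP : y ∈ P := Submodule.subset_span (by simp)
    have hrange : Set.range ![x, y] = {x, y} := by
      ext z; simp [Fin.exists_fin_two, or_comm]
    have hP2 : Module.finrank K P = 2 := by
      have := finrank_span_eq_card hli
      rw [hrange] at this
      simpa using this
    have hPnd : (B.restrict P).Nondegenerate := by
      refine (LinearMap.IsRefl.nondegenerate_iff_separatingLeft (B := B.restrict P) (fun a b h => hBrefl a b h)).mpr ?_
      rintro ⟨p, hp⟩ hbp
      rw [Submodule.mk_eq_zero]
      obtain ⟨a, b, hab⟩ := Submodule.mem_span_pair.mp hp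
      have h1 := hbp ⟨x, hxP⟩
      have h2 := hbp ⟨y, hyP⟩
      simp only [LinearMap.BilinForm.restrict_apply, domRestrict_apply, ← hab, map_add, map_smul,
        LinearMap.add_apply, LinearMap.smul_apply, smul_eq_mul,
        LinearMap.IsAlt.self_eq_zero halt, mul_zero, zero_add, add_zero] at h1 h2
      have hb : b = 0 := by
        rcases mul_eq_zero.mp h1 with h | h
        · exact h
        · exact absurd h hyx
      have ha : a = 0 := by
        rcases mul_eq_zero.mp h2 with h | h
        · exact h
        · exact absurd h hxy
      rw [← hab, ha, hb, zero_smul, zero_smul, add_zero]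
    have hcompl := isCompl_orthogonal_of_restrict_nondegenerate hBrefl hPnd
    set W := B.orthogonal P with hWdef
    have hWnd : (B.restrict W).Nondegenerate := by
      apply nondegenerate_restrict_of_disjoint_orthogonal B hBrefl
      rw [hWdef, B.orthogonal_orthogonal hnd hBrefl]
      exact hcompl.disjoint.symm
    have hWalt : (B.restrict W).IsAlt := fun w => halt w
    have hWdim : Module.finrank K W = n - 2 := by
      rw [hWdef, B.finrank_orthogonal hnd P, hP2, hn]
    have h2n : 2 ≤ n := by
      rw [← hn, ← hP2]; exact Submodule.finrank_le P
    have heven := ih (n - 2) (by omega) (B.restrict W) hWdim hWalt hWnd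
    obtain ⟨k, hk⟩ := heven
    exact ⟨k + 1, by omega⟩

/-- Char 2, r odd, n = 2r. If g, g₁ are symmetric bilinear forms of rank r with
distinct r-dimensional radicals U = rad g, U₁ = rad g₁ satisfying V = U ⊕ U₁,
then g + g₁ has rank n = 2r and is not alternating. -/
theorem sum_has_full_rank_not_alternating
    {K V : Type*} [Field K] [CharP K 2]
    [AddCommGroup V] [Module K V] [FiniteDimensional K V] (r : ℕ)
    (hrodd : Odd r) (hdim : Module.finrank K V = 2 * r)
    (g g₁ : V →ₗ[K] V →ₗ[K] K)
    (hg : LinearMap.BilinForm.IsSymm g) (hg₁ : LinearMap.BilinForm.IsSymm g₁)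
    (U U₁ : Submodule K V)
    (hU : LinearMap.ker g = U) (hU₁ : LinearMap.ker g₁ = U₁) (hUne : U ≠ U₁)
    (hdimU : Module.finrank K U = r) (hdimU₁ : Module.finrank K U₁ = r)
    (hcompl : IsCompl U U₁)
    (hrkg : Module.finrank K (LinearMap.range g) = r)
    (hrkg₁ : Module.finrank K (LinearMap.range g₁) = r) :
    Module.finrank K (LinearMap.range (g + g₁)) = 2 * r ∧
      ¬ LinearMap.BilinForm.IsAlt (g + g₁) := by
  have hgU : ∀ u ∈ U, g u = 0 := fun u hu => by rwa [← hU, LinearMap.mem_ker] at hu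
  have hg₁U₁ : ∀ u ∈ U₁, g₁ u = 0 := fun u hu => by rwa [← hU₁, LinearMap.mem_ker] at hu
  constructor
  · -- rank part
    have hker : LinearMap.ker (g + g₁) = ⊥ := by
      rw [eq_bot_iff]
      intro v hv
      rw [LinearMap.mem_ker, LinearMap.add_apply] at hv
      obtain ⟨u, hu, u₁, hu₁, rfl⟩ := Submodule.mem_sup.mp
        (hcompl.sup_eq_top ▸ Submodule.mem_top (x := v))
      have hgv : g (u + u₁) = g u₁ := by rw [map_add, hgU u hu, zero_add]
      have hg₁v : g₁ (u + u₁) = g₁ u := by rw [map_add, hg₁U₁ u₁ hu₁, add_zero]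
      rw [hgv, hg₁v] at hv
      -- the functional g u₁ = -(g₁ u) vanishes on U and U₁
      have hphi : g u₁ = 0 := by
        ext w
        obtain ⟨w₀, hw₀, w₁, hw₁, rfl⟩ := Submodule.mem_sup.mp
          (hcompl.sup_eq_top ▸ Submodule.mem_top (x := w))
        have e0 : g u₁ w₀ = 0 := by
          rw [← hg.eq w₀ u₁, hgU w₀ hw₀]; rfl
        have e1 : g u₁ w₁ = 0 := by
          have : g u₁ w₁ + g₁ u w₁ = 0 := by
            have := congrArg (fun f => f w₁) hv
            simpa using this
          rw [← hg₁.eq w₁ u, hg₁U₁ w₁ hw₁] at this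
          simpa using this
        rw [map_add, e0, e1, add_zero, LinearMap.zero_apply]
      have hu₁0 : u₁ = 0 := by
        have : u₁ ∈ U := by rw [← hU, LinearMap.mem_ker]; exact hphi
        exact (Submodule.mem_bot K).mp (hcompl.inf_eq_bot ▸ Submodule.mem_inf.mpr ⟨this, hu₁⟩)
      have hu0 : u = 0 := by
        have hg₁u : g₁ u = 0 := by rwa [hphi, zero_add] at hv
        have : u ∈ U₁ := by rw [← hU₁, LinearMap.mem_ker]; exact hg₁u
        exact (Submodule.mem_bot K).mp (hcompl.inf_eq_bot ▸ Submodule.mem_inf.mpr ⟨hu, this⟩)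
      rw [hu0, hu₁0, add_zero]
      exact Submodule.zero_mem ⊥
    have := LinearMap.finrank_range_add_finrank_ker (g + g₁)
    rw [hker, finrank_bot, add_zero, hdim] at this
    exact this
  · -- not alternating
    intro halt
    have hBalt : (LinearMap.BilinForm.restrict g U₁).IsAlt := by
      rintro ⟨u₁, hu₁⟩
      have h1 : (g + g₁) u₁ u₁ = 0 := halt u₁
      have h2 : g₁ u₁ u₁ = 0 := by rw [hg₁U₁ u₁ hu₁]; rfl
      rw [LinearMap.add_apply, LinearMap.add_apply, h2, add_zero] at h1
      simpa [LinearMap.BilinForm.restrict, LinearMap.domRestrict₁₂_apply] using h1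
    have hBnd : (LinearMap.BilinForm.restrict g U₁).Nondegenerate := by
      refine (LinearMap.IsRefl.nondegenerate_iff_separatingLeft (B := LinearMap.BilinForm.restrict g U₁) (fun a b h => hg.isRefl a b h)).mpr ?_
      rintro ⟨p, hp⟩ hbp
      rw [Submodule.mk_eq_zero]
      have hgp : g p = 0 := by
        ext w
        obtain ⟨w₀, hw₀, w₁, hw₁, rfl⟩ := Submodule.mem_sup.mp
          (hcompl.sup_eq_top ▸ Submodule.mem_top (x := w))
        have e0 : g p w₀ = 0 := by
          rw [← hg.eq w₀ p, hgU w₀ hw₀]; rfl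
        have e1 : g p w₁ = 0 := by
          have := hbp ⟨w₁, hw₁⟩
          simpa [LinearMap.BilinForm.restrict, LinearMap.domRestrict₁₂_apply] using this
        rw [map_add, e0, e1, add_zero, LinearMap.zero_apply]
      have hpU : p ∈ U := by rw [← hU, LinearMap.mem_ker]; exact hgp
      exact (Submodule.mem_bot K).mp (hcompl.inf_eq_bot ▸ Submodule.mem_inf.mpr ⟨hpU, hp⟩)
    have := even_of_alt_nondeg r (LinearMap.BilinForm.restrict g U₁) hdimU₁ hBalt hBnd
    exact (Nat.not_even_iff_odd.mpr hrodd) this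
end

section
/- Let V be an n-dimensional vector space over a field K and let 2 ≤ 2r ≤ n. Then Symm(V) contains a subspace of dimension n − 2r + 1 in which every nonzero element has rank exactly 2r. -/
open Matrix Module

section Aux

variable {K : Type*} [Field K]

/-- The product of two submodules is equivalent to the product of the subtypes. -/
def subProdEquiv {R M M' : Type*} [Ring R] [AddCommGroup M] [AddCommGroup M'] [Module R M]
    [Module R M'] (p : Submodule R M) (q : Submodule R M') :
    (p.prod q) ≃ₗ[R] p × q where
  toFun x := (⟨x.1.1, x.2.1⟩, ⟨x.1.2, x.2.2⟩)
  invFun y := ⟨(y.1.1, y.2.1), ⟨y.1.2, y.2.2⟩⟩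
  map_add' _ _ := rfl
  map_smul' _ _ := rfl
  left_inv _ := rfl
  right_inv _ := rfl

theorem rank_fromBlocks_antidiag_s18 {m m' n n' : Type*} [Fintype m] [Fintype m']
    [Fintype n] [Fintype n'] [DecidableEq n] [DecidableEq n']
    (A : Matrix m n' K) (D : Matrix m' n K) :
    (Matrix.fromBlocks 0 A D 0).rank = A.rank + D.rank := by
  classical
  set L := (Matrix.fromBlocks 0 A D 0).mulVecLin with hLdef
  have key : ∀ v : n ⊕ n' → K,
      L v = Sum.elim (A.mulVec (v ∘ Sum.inr)) (D.mulVec (v ∘ Sum.inl)) := by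
    intro v
    have hv : v = Sum.elim (v ∘ Sum.inl) (v ∘ Sum.inr) := by funext x; cases x <;> rfl
    rw [hLdef]
    simp only [Matrix.mulVecLin_apply]
    conv_lhs => rw [hv]
    rw [Matrix.fromBlocks_mulVec]
    simp
  let e := LinearEquiv.sumArrowLequivProdArrow m m' K K
  have he : ∀ v : n ⊕ n' → K,
      e (L v) = (A.mulVec (v ∘ Sum.inr), D.mulVec (v ∘ Sum.inl)) := by
    intro v; rw [key]; rfl
  have hrange : Submodule.map (e : (m ⊕ m' → K) →ₗ[K] (m → K) × (m' → K))
      (LinearMap.range L)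
      = (LinearMap.range A.mulVecLin).prod (LinearMap.range D.mulVecLin) := by
    ext x
    simp only [Submodule.mem_map, LinearMap.mem_range, Submodule.mem_prod,
      Matrix.mulVecLin_apply]
    constructor
    · rintro ⟨-, ⟨v, rfl⟩, rfl⟩
      simp only [LinearEquiv.coe_coe]
      rw [he]
      exact ⟨⟨_, rfl⟩, ⟨_, rfl⟩⟩
    · rintro ⟨⟨u, hu⟩, ⟨w, hw⟩⟩
      refine ⟨L (Sum.elim w u), ⟨_, rfl⟩, ?_⟩
      simp only [LinearEquiv.coe_coe]
      rw [he]
      have h1 : (Sum.elim w u ∘ Sum.inr) = u := rfl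
      have h2 : (Sum.elim w u ∘ Sum.inl) = w := rfl
      rw [h1, h2, hu, hw]
  have : (Matrix.fromBlocks 0 A D 0).rank = finrank K (LinearMap.range L) := rfl
  rw [this, ← LinearEquiv.finrank_map_eq e, hrange]
  rw [LinearEquiv.finrank_eq (subProdEquiv _ _), Module.finrank_prod]
  rfl

variable (n r : ℕ)

/-- The banded Toeplitz block. -/
def Bmat (c : Fin (n - 2 * r + 1) → K) : Matrix (Fin (n - r)) (Fin r) K :=
  Matrix.of fun p q =>
    if h : (q : ℕ) ≤ (p : ℕ) ∧ (p : ℕ) - (q : ℕ) ≤ n - 2 * r then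
      c ⟨(p : ℕ) - (q : ℕ), by omega⟩ else 0

/-- The symmetric block matrix `[[0, Bᵀ], [B, 0]]`. -/
def Smat (c : Fin (n - 2 * r + 1) → K) :
    Matrix (Fin r ⊕ Fin (n - r)) (Fin r ⊕ Fin (n - r)) K :=
  Matrix.fromBlocks 0 (Bmat n r c)ᵀ (Bmat n r c) 0

theorem Bmat_add (c d : Fin (n - 2 * r + 1) → K) :
    Bmat n r (c + d) = Bmat n r c + Bmat n r d := by
  ext p q
  simp only [Bmat, Matrix.add_apply, Matrix.of_apply, Pi.add_apply]
  split <;> simp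

theorem Bmat_smul (a : K) (c : Fin (n - 2 * r + 1) → K) :
    Bmat n r (a • c) = a • Bmat n r c := by
  ext p q
  simp only [Bmat, Matrix.smul_apply, Matrix.of_apply, Pi.smul_apply, smul_eq_mul]
  split <;> simp

theorem Smat_add (c d : Fin (n - 2 * r + 1) → K) :
    Smat n r (c + d) = Smat n r c + Smat n r d := by
  simp only [Smat, Bmat_add, Matrix.transpose_add, Matrix.fromBlocks_add, add_zero]

theorem Smat_smul (a : K) (c : Fin (n - 2 * r + 1) → K) :
    Smat n r (a • c) = a • Smat n r c := by
  simp only [Smat, Bmat_smul, Matrix.transpose_smul, Matrix.fromBlocks_smul, smul_zero]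

/-- `Smat` as a linear map. -/
def SmatLin : (Fin (n - 2 * r + 1) → K) →ₗ[K]
    Matrix (Fin r ⊕ Fin (n - r)) (Fin r ⊕ Fin (n - r)) K where
  toFun := Smat n r
  map_add' := Smat_add n r
  map_smul' := Smat_smul n r

theorem Smat_transpose (c : Fin (n - 2 * r + 1) → K) : (Smat n r c)ᵀ = Smat n r c := by
  simp [Smat, Matrix.fromBlocks_transpose]

theorem Bmat_rank (hr : 1 ≤ r) (hrn : 2 * r ≤ n) {c : Fin (n - 2 * r + 1) → K}
    (hc : c ≠ 0) : (Bmat n r c).rank = r := by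
  classical
  have hex : ∃ k : ℕ, ∃ hk : k < n - 2 * r + 1, c ⟨k, hk⟩ ≠ 0 := by
    obtain ⟨k, hk⟩ := Function.ne_iff.mp hc
    exact ⟨k, k.isLt, hk⟩
  set k0 := Nat.find hex with hk0def
  obtain ⟨hk0lt, hk0⟩ := Nat.find_spec hex
  have hk0min : ∀ j (hj : j < n - 2 * r + 1), j < k0 → c ⟨j, hj⟩ = 0 := by
    intro j hj hlt
    by_contra h
    exact (Nat.find_min hex hlt) ⟨hj, h⟩
  have hk0le : k0 ≤ n - 2 * r := by omega
  let P : Matrix (Fin r) (Fin (n - r)) K :=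
    Matrix.of fun a p => if (p : ℕ) = k0 + (a : ℕ) then 1 else 0
  set T := P * Bmat n r c with hTdef
  have hT : ∀ a b : Fin r, T a b = Bmat n r c ⟨k0 + (a : ℕ), by omega⟩ b := by
    intro a b
    rw [hTdef, Matrix.mul_apply]
    rw [Finset.sum_eq_single (⟨k0 + (a : ℕ), by omega⟩ : Fin (n - r))]
    · simp [P]
    · intro p _ hp
      have : (p : ℕ) ≠ k0 + (a : ℕ) := by
        intro h; apply hp; exact Fin.ext h
      simp [P, this]
    · intro h; exact absurd (Finset.mem_univ _) h
  have hTdiag : ∀ a : Fin r, T a a = c ⟨k0, hk0lt⟩ := by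
    intro a
    rw [hT]
    have hcond : (a : ℕ) ≤ k0 + (a : ℕ) ∧ k0 + (a : ℕ) - (a : ℕ) ≤ n - 2 * r := by omega
    simp only [Bmat, Matrix.of_apply, dif_pos hcond]
    congr 1
    simp only [Fin.mk.injEq]
    omega
  have hTzero : ∀ a b : Fin r, a < b → T a b = 0 := by
    intro a b hab
    rw [hT]
    simp only [Bmat, Matrix.of_apply]
    split
    · rename_i hcond
      have hcond' : (b : ℕ) ≤ k0 + (a : ℕ) ∧ k0 + (a : ℕ) - (b : ℕ) ≤ n - 2 * r := by
        simpa using hcond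
      apply hk0min
      have : (a : ℕ) < (b : ℕ) := hab
      omega
    · rfl
  have hdet : T.det = c ⟨k0, hk0lt⟩ ^ r := by
    rw [Matrix.det_of_lowerTriangular T (fun i j h => hTzero i j (by
      simpa using h))]
    simp [hTdiag]
  have hunit : IsUnit T := by
    rw [Matrix.isUnit_iff_isUnit_det, hdet]
    exact (pow_ne_zero _ hk0).isUnit
  have h1 : T.rank = r := by
    rw [Matrix.rank_of_isUnit T hunit, Fintype.card_fin]
  have h2 : T.rank ≤ (Bmat n r c).rank := Matrix.rank_mul_le_right P _
  have h3 : (Bmat n r c).rank ≤ r := by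
    have := Matrix.rank_le_card_width (Bmat n r c)
    simpa using this
  omega

theorem Smat_rank (hr : 1 ≤ r) (hrn : 2 * r ≤ n) {c : Fin (n - 2 * r + 1) → K}
    (hc : c ≠ 0) : (Smat n r c).rank = 2 * r := by
  rw [Smat, rank_fromBlocks_antidiag_s18, Matrix.rank_transpose, Bmat_rank n r hr hrn hc,
    two_mul]

theorem Smat_eq_zero (hr : 1 ≤ r) (hrn : 2 * r ≤ n) {c : Fin (n - 2 * r + 1) → K}
    (h : Smat n r c = 0) : c = 0 := by
  funext k
  have hkk : (k : ℕ) < n - 2 * r + 1 := k.isLt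
  have hlt : (k : ℕ) < n - r := by omega
  have h0 : (0 : ℕ) < r := hr
  have key : Bmat n r c ⟨(k : ℕ), hlt⟩ ⟨0, h0⟩ = c k := by
    simp only [Bmat, Matrix.of_apply]
    rw [dif_pos ⟨Nat.zero_le _, by omega⟩]
    congr 1
  have := congrFun (congrFun h (Sum.inr ⟨(k : ℕ), hlt⟩)) (Sum.inl ⟨0, h0⟩)
  simp only [Smat, Matrix.fromBlocks_apply₂₁, Matrix.zero_apply] at this
  rw [key] at this
  exact this

end Aux

section BilinAux

variable {K V : Type*} [Field K] [AddCommGroup V] [Module K V] [FiniteDimensional K V]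
variable {ι : Type*} [Fintype ι] [DecidableEq ι]

theorem finrank_range_toBilin (b : Basis ι K V) (S : Matrix ι ι K) :
    finrank K (LinearMap.range (Matrix.toBilin b S)) = S.rank := by
  have h : Matrix.toBilin b S = Matrix.toLin b b.dualBasis Sᵀ := by
    apply b.ext
    intro i
    apply b.ext
    intro j
    have hlhs : Matrix.toBilin b S (b i) (b j) = S i j := by
      have h1 := BilinForm.toMatrix_apply b (Matrix.toBilin b S) i j
      rw [BilinForm.toMatrix_toBilin] at h1
      exact h1.symm
    rw [hlhs, Matrix.toLin_self]
    simp only [LinearMap.coe_sum, LinearMap.coe_smul, Finset.sum_apply, Pi.smul_apply,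
      Basis.dualBasis_apply_self, smul_eq_mul, Matrix.transpose_apply, mul_ite, mul_one,
      mul_zero]
    simp [Finset.sum_ite_eq']
  rw [h, ← Matrix.rank_eq_finrank_range_toLin Sᵀ b.dualBasis b, Matrix.rank_transpose]

theorem isSymm_toBilin (b : Basis ι K V) {S : Matrix ι ι K} (hS : Sᵀ = S) :
    (Matrix.toBilin b S).IsSymm := by
  rw [LinearMap.BilinForm.isSymm_def]
  intro x y
  simp only [RingHom.id_apply, Matrix.toBilin_apply]
  rw [Finset.sum_comm]
  refine Finset.sum_congr rfl fun j _ => Finset.sum_congr rfl fun i _ => ?_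
  have hij : S i j = S j i := congrFun (congrFun hS.symm i) j
  rw [hij]; ring

end BilinAux

/-- Symm(V) contains a subspace of dimension n − 2r + 1 in which every nonzero
element has rank exactly 2r, whenever 2 ≤ 2r ≤ n. -/
theorem exists_constant_even_rank_subspace {K V : Type*} [Field K]
    [AddCommGroup V] [Module K V] [FiniteDimensional K V] (n r : ℕ)
    (hdim : Module.finrank K V = n) (hr : 2 ≤ 2 * r) (hrn : 2 * r ≤ n) :
    ∃ M : Submodule K (V →ₗ[K] V →ₗ[K] K),
      (∀ f ∈ M, LinearMap.BilinForm.IsSymm f) ∧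
      Module.finrank K M = n - 2 * r + 1 ∧
      ∀ f ∈ M, f ≠ 0 → Module.finrank K (LinearMap.range f) = 2 * r := by
  classical
  have hr1 : 1 ≤ r := by omega
  let b0 : Basis (Fin n) K V := Module.finBasisOfFinrankEq K V hdim
  let e : Fin r ⊕ Fin (n - r) ≃ Fin n :=
    finSumFinEquiv.trans (finCongr (by omega))
  let b : Basis (Fin r ⊕ Fin (n - r)) K V := b0.reindex e.symm
  let φ : (Fin (n - 2 * r + 1) → K) →ₗ[K] (V →ₗ[K] V →ₗ[K] K) :=
    (Matrix.toBilin b).toLinearMap.comp (SmatLin n r)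
  have hφ : ∀ c, φ c = Matrix.toBilin b (Smat n r c) := fun c => rfl
  refine ⟨LinearMap.range φ, ?_, ?_, ?_⟩
  · rintro f ⟨c, rfl⟩
    rw [hφ]
    exact isSymm_toBilin b (Smat_transpose n r c)
  · have hinj : Function.Injective φ := by
      rw [injective_iff_map_eq_zero]
      intro c hc
      rw [hφ] at hc
      have : Smat n r c = 0 := by
        have := (Matrix.toBilin b).map_eq_zero_iff.mp hc
        exact this
      exact Smat_eq_zero n r hr1 hrn this
    rw [LinearMap.finrank_range_of_inj hinj]
    simp
  · rintro f ⟨c, rfl⟩ hf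
    have hc : c ≠ 0 := by
      rintro rfl
      exact hf (map_zero φ)
    rw [hφ, finrank_range_toBilin b, Smat_rank n r hr1 hrn hc]
end
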